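/- arXiv:2101.07247 — 5 statements merged into one kernel-verified Lean document; each statement's English description precedes it below -/
import Mathlib

section
/- Let G be an infinite graph obtained from the complete graph on ℵ₁ vertices by attaching to each vertex v a new ray R_v meeting the complete graph exactly in its first vertex v, with the rays R_v pairwise disjoint. Then the direction of G induced by the rays lying inside the complete graph K^{ℵ₁} is not countably determined in G. -/
/-! Common definitions: rays, ends (à la Halin), the end space, directions
(via Mathlib's `SimpleGraph.end`), domination, generalised paths, etc. -/

open Classical SimpleGraph

universe u

variable {V : Type u}

/-- A ray in `G`: a one-way infinite path. -/
structure Ray (G : SimpleGraph V) where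
  f : ℕ → V
  inj : Function.Injective f
  adj : ∀ n, G.Adj (f n) (f (n + 1))

namespace Ray

variable {G : SimpleGraph V}

/-- `R` has a tail inside the vertex set `S`. -/
def TailIn (R : Ray G) (S : Set V) : Prop :=
  ∃ N, ∀ n, N ≤ n → R.f n ∈ S

/-- The set of the first `n` vertices of `R`. -/
noncomputable def initSeg (R : Ray G) (n : ℕ) : Finset V :=
  (Finset.range n).image R.f

end Ray

/-- Two rays are equivalent if no finite vertex set separates them, i.e. for
every finite `X` they have tails in a common component of `G - X`. -/
def RayEquiv (G : SimpleGraph V) (R S : Ray G) : Prop :=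
  ∀ X : Finset V, ∃ C : G.ComponentCompl (X : Set V), R.TailIn C ∧ S.TailIn C

/-- The ends of `G` in the sense of Halin: equivalence classes of rays. -/
def Ends (G : SimpleGraph V) : Type u :=
  { ω : Set (Ray G) // ∃ R : Ray G, ω = { S | RayEquiv G R S } }

/-- The end of a ray. -/
def Ray.end (G : SimpleGraph V) (R : Ray G) : Ends G :=
  ⟨{ S | RayEquiv G R S }, R, rfl⟩

/-- The end `ω` lives in the component `C` of `G - X`:  every ray in `ω` has a
tail in `C`.  (For genuine ends this is the statement `C = C(X,ω)`.) -/
def LivesIn {G : SimpleGraph V} (ω : Ends G) (X : Finset V)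
    (C : G.ComponentCompl (X : Set V)) : Prop :=
  ∀ R ∈ ω.1, R.TailIn C

/-- The basic open set `Ω(X,C)` of the end space. -/
def basicSet (G : SimpleGraph V) (X : Finset V) (C : G.ComponentCompl (X : Set V)) :
    Set (Ends G) :=
  { ω | LivesIn ω X C }

/-- The end space: the topology on `Ends G` generated by the sets `Ω(X,C)`. -/
instance endsTopology (G : SimpleGraph V) : TopologicalSpace (Ends G) :=
  TopologicalSpace.generateFrom
    { U | ∃ (X : Finset V) (C : G.ComponentCompl (X : Set V)), U = basicSet G X C }

section Directions

/-- The component `f(X)` chosen by the direction `f` at the finite vertex set `X`. -/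
def dirComp {G : SimpleGraph V} (f : G.end) (X : Finset V) : G.ComponentCompl (X : Set V) :=
  f.1 (Opposite.op X)


variable (G : SimpleGraph V)

/-- The ray `R` induces the direction `f` (i.e. `f = f_ω` for the end `ω` of `R`):
for every finite `X`, the component `f(X)` contains a tail of `R`. -/
def InducesDir {G : SimpleGraph V} (R : Ray G) (f : G.end) : Prop :=
  ∀ X : Finset V, R.TailIn (dirComp f X : Set V)

/-- The end `ω` induces the direction `f`, i.e. `f = f_ω`. -/
def EndInducesDir {G : SimpleGraph V} (ω : Ends G) (f : G.end) : Prop :=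
  ∀ (X : Finset V), ∀ R ∈ ω.1, R.TailIn (dirComp f X : Set V)

/-- A direction `f` is countably determined in `G` if some countable set of
directional choices `(X, C)` distinguishes `f` from every other direction. -/
def DirCountablyDetermined {G : SimpleGraph V} (f : G.end) : Prop :=
  ∃ D : Set ((X : Finset V) × G.ComponentCompl (X : Set V)), D.Countable ∧
    ∀ h : G.end, h ≠ f → ∃ p ∈ D,
      dirComp f p.1 = p.2 ∧ dirComp h p.1 ≠ p.2

/-- `G` is countably determined: some countable set of directional choices
distinguishes every two distinct directions of `G` from each other. -/
def GraphCountablyDetermined (G : SimpleGraph V) : Prop :=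
  ∃ D : Set ((X : Finset V) × G.ComponentCompl (X : Set V)), D.Countable ∧
    ∀ f h : G.end, f ≠ h → ∃ p ∈ D,
      (dirComp f p.1 = p.2 ∧ dirComp h p.1 ≠ p.2) ∨
      (dirComp h p.1 = p.2 ∧ dirComp f p.1 ≠ p.2)

/-- `R` is directional in `G`: the directional choices given by the finite
initial segments of `R` distinguish the direction induced by `R` from every
other direction of `G`. -/
def Directional {G : SimpleGraph V} (R : Ray G) : Prop :=
  ∀ h : G.end, (∃ X : Finset V, ¬ R.TailIn (dirComp h X : Set V)) →
    ∃ n : ℕ, ¬ R.TailIn (dirComp h (R.initSeg n) : Set V)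

/-- `R` is topological in `G`: the basic open sets `Ω(X_n, ω)`, for `X_n` the
first `n` vertices of `R` and `ω` the end of `R`, form a neighbourhood base at
`ω` in the end space of `G`. -/
def Topological {G : SimpleGraph V} (R : Ray G) : Prop :=
  ∀ U : Set (Ends G), IsOpen U → R.end G ∈ U →
    ∃ (n : ℕ) (C : G.ComponentCompl (R.initSeg n : Set V)),
      LivesIn (R.end G) (R.initSeg n) C ∧ basicSet G (R.initSeg n) C ⊆ U

end Directions

section Domination

variable (G : SimpleGraph V)

/-- `v` dominates the ray `R`: no finite vertex set avoiding `v` separates `v`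
from `R` (equivalently, there is an infinite `v`–`R` fan). -/
def DominatesRay (v : V) (R : Ray G) : Prop :=
  ∀ X : Finset V, v ∉ X → ∃ (u : V) (W : G.Walk v u),
    (∃ n, R.f n = u) ∧ ∀ w ∈ W.support, w ∉ (X : Set V)

/-- `v` dominates the end `ω`. -/
def DominatesEnd (v : V) (ω : Ends G) : Prop :=
  ∀ R ∈ ω.1, DominatesRay G v R

end Domination

/-- A double ray in `G`. -/
structure DoubleRay (G : SimpleGraph V) where
  f : ℤ → V
  inj : Function.Injective f
  adj : ∀ n : ℤ, G.Adj (f n) (f (n + 1))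

namespace DoubleRay

variable {G : SimpleGraph V}

/-- The positive tail of `D` lies in the end `ω`. -/
def PosTailIn (D : DoubleRay G) (ω : Ends G) : Prop :=
  ∃ R ∈ ω.1, ∃ N : ℤ, ∀ n : ℕ, R.f n = D.f (N + n)

/-- The negative tail of `D` lies in the end `ω`. -/
def NegTailIn (D : DoubleRay G) (ω : Ends G) : Prop :=
  ∃ R ∈ ω.1, ∃ N : ℤ, ∀ n : ℕ, R.f n = D.f (N - n)

end DoubleRay

/-- `P` is (the vertex set of) a generalised path in `G` with endpoints
`ω₁ ≠ ω₂`. -/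
def IsGenPath (G : SimpleGraph V) (P : Set V) (ω₁ ω₂ : Ends G) : Prop :=
  (∃ D : DoubleRay G, P = Set.range D.f ∧
    ((D.PosTailIn ω₁ ∧ D.NegTailIn ω₂) ∨ (D.PosTailIn ω₂ ∧ D.NegTailIn ω₁))) ∨
  (∃ (u v : V) (W : G.Walk u v), W.IsPath ∧ P = { x | x ∈ W.support } ∧
    ((DominatesEnd G u ω₁ ∧ DominatesEnd G v ω₂) ∨
     (DominatesEnd G u ω₂ ∧ DominatesEnd G v ω₁))) ∨
  (∃ R : Ray G, P = Set.range R.f ∧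
    ((R ∈ ω₁.1 ∧ DominatesEnd G (R.f 0) ω₂) ∨
     (R ∈ ω₂.1 ∧ DominatesEnd G (R.f 0) ω₁)))

/-- A sun in `G` centred at `ω`: pairwise vertex-disjoint generalised paths
`(P i, {ω, leaf i})` with pairwise distinct leaves `leaf i ≠ ω`, where either
all the `P i` are double rays with one tail in `leaf i` and another in `ω`, or
all the `P i` are rays in `leaf i` whose first vertices dominate `ω`. -/
def IsSun (G : SimpleGraph V) (ω : Ends G) {I : Type*}
    (P : I → Set V) (leaf : I → Ends G) : Prop :=
  (∀ i j, i ≠ j → Disjoint (P i) (P j)) ∧ Function.Injective leaf ∧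
  (∀ i, leaf i ≠ ω) ∧
  ((∀ i, ∃ D : DoubleRay G, P i = Set.range D.f ∧
      ((D.PosTailIn (leaf i) ∧ D.NegTailIn ω) ∨
       (D.PosTailIn ω ∧ D.NegTailIn (leaf i)))) ∨
   (∀ i, ∃ R : Ray G, P i = Set.range R.f ∧ R ∈ (leaf i).1 ∧
      DominatesEnd G (R.f 0) ω))


/-- The relation whose symmetric closure gives `K^{ℵ₁}` with a ray attached to
every vertex: `Sum.inl w` are the vertices of the complete graph, and
`Sum.inr (w, n)` is the `(n+1)`-st vertex of the ray `R_w` attached at `w`. -/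
def kayRel (W : Type u) : (W ⊕ W × ℕ) → (W ⊕ W × ℕ) → Prop := fun x y =>
  (∃ w w' : W, w ≠ w' ∧ x = Sum.inl w ∧ y = Sum.inl w') ∨
  (∃ w : W, x = Sum.inl w ∧ y = Sum.inr (w, 0)) ∨
  (∃ (w : W) (n : ℕ), x = Sum.inr (w, n) ∧ y = Sum.inr (w, n + 1))

/-- The graph obtained from the complete graph on `W` by attaching a new
disjoint ray at every vertex. -/
def kayGraph (W : Type u) : SimpleGraph (W ⊕ W × ℕ) := SimpleGraph.fromRel (kayRel W)


section Aux

variable {W : Type}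

lemma kay_adj_ray (w : W) (n : ℕ) :
    (kayGraph W).Adj (Sum.inr (w, n)) (Sum.inr (w, n + 1)) := by
  rw [kayGraph, fromRel_adj]
  exact ⟨by simp, Or.inl (Or.inr (Or.inr ⟨w, n, rfl, rfl⟩))⟩

lemma kay_adj_attach (w : W) :
    (kayGraph W).Adj (Sum.inl w) (Sum.inr (w, 0)) := by
  rw [kayGraph, fromRel_adj]
  exact ⟨by simp, Or.inl (Or.inr (Or.inl ⟨w, rfl, rfl⟩))⟩

lemma kay_adj_clique {w w' : W} (h : w ≠ w') :
    (kayGraph W).Adj (Sum.inl w) (Sum.inl w') := by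
  rw [kayGraph, fromRel_adj]
  exact ⟨by simpa using h, Or.inl (Or.inl ⟨w, w', h, rfl, rfl⟩)⟩

/-- Any neighbour of a ray vertex `inr (w, n)` is either `inl w` or another
ray vertex `inr (w, m)`. -/
lemma kay_adj_cases {w : W} {n : ℕ} {y : W ⊕ W × ℕ}
    (h : (kayGraph W).Adj (Sum.inr (w, n)) y) :
    y = Sum.inl w ∨ ∃ m, y = Sum.inr (w, m) := by
  rw [kayGraph, fromRel_adj] at h
  obtain ⟨-, h | h⟩ := h <;>
    rcases h with ⟨a, b, hab, h1, h2⟩ | ⟨a, h1, h2⟩ | ⟨a, m, h1, h2⟩ <;>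
    simp_all

/-- If `S` avoids `K`-boundary steps, the component of a vertex of `S` lies in `S`. -/
lemma componentComplMk_subset {V : Type u} {G : SimpleGraph V} {K : Set V} {S : Set V}
    (hS : ∀ ⦃a b⦄, a ∈ S → b ∉ K → G.Adj a b → b ∈ S)
    {v : V} (hv : v ∉ K) (hvS : v ∈ S) :
    (G.componentComplMk hv : Set V) ⊆ S := by
  intro u hu
  obtain ⟨hu', he⟩ := hu
  have hr : (G.induce Kᶜ).Reachable ⟨v, hv⟩ ⟨u, hu'⟩ :=
    (SimpleGraph.ConnectedComponent.eq.mp he).symm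
  obtain ⟨p⟩ := hr
  have key : ∀ (a b : ↥(Kᶜ)) (_ : (G.induce Kᶜ).Walk a b), a.1 ∈ S → b.1 ∈ S := by
    intro a b p
    induction p with
    | nil => exact id
    | @cons x y z hadj q ih => exact fun hx => ih (hS hx y.2 hadj)
  exact key _ _ p hvS

/-- A bound above all ray-indices occurring in `X`. -/
def bigN (X : Finset (W ⊕ W × ℕ)) : ℕ :=
  X.sup (fun x => match x with | Sum.inl _ => 0 | Sum.inr (_, n) => n + 1)

lemma bigN_not_mem (w : W) (X : Finset (W ⊕ W × ℕ)) {k : ℕ} (hk : bigN X ≤ k) :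
    Sum.inr (w, k) ∉ (X : Set (W ⊕ W × ℕ)) := by
  intro hmem
  have := Finset.le_sup (f := fun x : W ⊕ W × ℕ =>
    match x with | Sum.inl _ => 0 | Sum.inr (_, n) => n + 1) hmem
  simp only at this
  rw [bigN] at hk
  omega

/-- Two ray vertices beyond the separator lie in the same component. -/
lemma ray_same (w : W) (X : Finset (W ⊕ W × ℕ)) {a b : ℕ} (hab : a ≤ b)
    (h : ∀ k, a ≤ k → Sum.inr (w, k) ∉ (X : Set (W ⊕ W × ℕ))) :
    (kayGraph W).componentComplMk (h a le_rfl) =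
      (kayGraph W).componentComplMk (h b hab) := by
  induction b, hab using Nat.le_induction with
  | base => rfl
  | succ b hb ih =>
      rw [ih]
      exact (kayGraph W).componentComplMk_eq_of_adj _ _ (kay_adj_ray w b)

end Aux

/-- For `W` of size `ℵ₁`, the direction of `kayGraph W` induced by (any of) the
rays lying inside the complete graph `K^{ℵ₁}` is not countably determined. -/
theorem stmt_1 (W : Type) (hW : Cardinal.mk W = Cardinal.aleph 1)
    (f : (kayGraph W).end) (R : Ray (kayGraph W))
    (hR : ∀ n, ∃ w : W, R.f n = Sum.inl w) (hind : InducesDir R f) :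
    ¬ DirCountablyDetermined f := by
  rintro ⟨D, hDc, hdist⟩
  set V := W ⊕ W × ℕ
  -- the countable set of `w : W` touched by some separator in `D`
  let proj : V → W := fun x => match x with | Sum.inl w => w | Sum.inr (w, _) => w
  let B : Set W := ⋃ p ∈ D, (proj '' (p.1 : Set V))
  have hBc : B.Countable := hDc.biUnion fun p _ => (p.1.finite_toSet.image proj).countable
  obtain ⟨w, hw⟩ : ∃ w : W, w ∉ B := by
    by_contra hc
    push_neg at hc
    have : (Set.univ : Set W).Countable := by
      have : B = Set.univ := Set.eq_univ_of_forall hc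
      rw [← this]; exact hBc
    have : Countable W := Set.countable_univ_iff.mp this
    have h1 : Cardinal.mk W ≤ Cardinal.aleph0 := Cardinal.mk_le_aleph0
    rw [hW] at h1
    exact absurd h1 (not_le.mpr Cardinal.aleph0_lt_aleph_one)
  -- facts about the fresh `w`
  have hwD : ∀ p ∈ D, ∀ x ∈ (p.1 : Finset V), proj x ≠ w := by
    intro p hp x hx he
    exact hw (Set.mem_biUnion hp ⟨x, hx, he⟩)
  -- the direction of the ray attached at `w`
  have hsec : (fun X : (Finset V)ᵒᵖ =>
      (kayGraph W).componentComplMk (bigN_not_mem w X.unop le_rfl)) ∈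
      ((kayGraph W).componentComplFunctor).sections := by
    intro j j' g
    simp only [componentComplFunctor_map]
    have hsub : (j'.unop : Finset V) ⊆ j.unop := CategoryTheory.le_of_op_hom g
    refine (ComponentCompl.hom_mk _ (Finset.coe_subset.mpr hsub)).trans ?_
    have hmono : bigN (W := W) j'.unop ≤ bigN j.unop :=
      Finset.sup_mono hsub
    exact (ray_same w j'.unop hmono
      (fun k hk => bigN_not_mem w j'.unop hk)).symm
  let h : (kayGraph W).end := ⟨_, hsec⟩
  -- `h ≠ f`: separate by `{inl w}`
  have hne : h ≠ f := by
    intro he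
    set X0 : Finset V := {Sum.inl w} with hX0
    obtain ⟨M, hM⟩ := hind X0
    obtain ⟨w', hw'⟩ := hR M
    have hmem : R.f M ∈ (dirComp f X0 : Set V) := hM M le_rfl
    rw [← he] at hmem
    have hclosed : ∀ ⦃a b : V⦄, a ∈ {x : V | ∃ m, x = Sum.inr (w, m)} →
        b ∉ (X0 : Set V) → (kayGraph W).Adj a b →
        b ∈ {x : V | ∃ m, x = Sum.inr (w, m)} := by
      rintro a b ⟨m, rfl⟩ hb hadj
      rcases kay_adj_cases hadj with rfl | hm
      · exact absurd (by simp [hX0]) hb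
      · exact hm
    have hsub : (dirComp h X0 : Set V) ⊆ {x : V | ∃ m, x = Sum.inr (w, m)} :=
      componentComplMk_subset hclosed _ ⟨bigN X0, rfl⟩
    obtain ⟨m, hm⟩ := hsub hmem
    rw [hw'] at hm
    exact absurd hm (by simp)
  -- but `h` agrees with `f` on every choice in `D`
  obtain ⟨p, hpD, hfp, hhp⟩ := hdist h hne
  apply hhp
  rw [← hfp]
  -- show `dirComp h p.1 = dirComp f p.1`
  set X : Finset V := p.1
  have hall : ∀ k, (k : ℕ) ≥ 0 → Sum.inr (w, k) ∉ (X : Set V) := by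
    intro k _ hk
    exact hwD p hpD _ hk rfl
  have hlw : Sum.inl w ∉ (X : Set V) := fun hk => hwD p hpD _ hk rfl
  obtain ⟨M, hM⟩ := hind X
  obtain ⟨w', hw'⟩ := hR M
  have hmem : R.f M ∈ (dirComp f X : Set V) := hM M le_rfl
  rw [hw'] at hmem
  obtain ⟨hw'', he⟩ := hmem
  have e1 : dirComp h X = (kayGraph W).componentComplMk (hall (bigN X) (Nat.zero_le _)) := rfl
  have e2 : (kayGraph W).componentComplMk (hall 0 le_rfl) =
      (kayGraph W).componentComplMk (hall (bigN X) (Nat.zero_le _)) :=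
    ray_same w X (Nat.zero_le _) hall
  have e3 : (kayGraph W).componentComplMk hlw =
      (kayGraph W).componentComplMk (hall 0 le_rfl) :=
    (kayGraph W).componentComplMk_eq_of_adj _ _ (kay_adj_attach w)
  have e4 : (kayGraph W).componentComplMk hlw =
      (kayGraph W).componentComplMk hw'' := by
    rcases eq_or_ne w w' with rfl | hne'
    · rfl
    · exact (kayGraph W).componentComplMk_eq_of_adj _ _ (kay_adj_clique hne')
  rw [e1, ← e2, ← e3, e4, he]
end

section
/- For every graph G and every ray R ⊆ G, the ray R is directional in G if and only if R is topological in G; that is, the directional choices defined by the finite initial segments of R distinguish the direction induced by R from every other direction of G if and only if the sets Ω(X_n, ω) for X_n the first n vertices of R form a neighbourhood base at the end ω of R in the end space of G. -/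
/-! Common definitions: rays, ends (à la Halin), the end space, directions
(via Mathlib's `SimpleGraph.end`), domination, generalised paths, etc. -/

open Classical SimpleGraph

universe u

variable {V : Type u}

section CompBasics
variable {V : Type u} {G : SimpleGraph V}


lemma aux_mem_comp_unique {K : Set V} {C D : G.ComponentCompl K} {v : V}
    (hC : v ∈ C) (hD : v ∈ D) : C = D := by
  obtain ⟨h1, e1⟩ := hC
  obtain ⟨h2, e2⟩ := hD
  exact e1.symm.trans e2

lemma aux_walk_same_comp {K : Set V} {a b : V} (w : G.Walk a b) :
    (∀ v ∈ w.support, v ∉ K) →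
      ∀ (ha : a ∉ K) (hb : b ∉ K), G.componentComplMk ha = G.componentComplMk hb := by
  induction w with
  | nil => intro _ ha hb; rfl
  | @cons a' u' b' adj rest ih =>
    intro hsupp ha hb
    have hu : u' ∉ K := hsupp u' (by simp [Walk.support_cons])
    have h1 : G.componentComplMk ha = G.componentComplMk hu :=
      G.componentComplMk_eq_of_adj ha hu adj
    exact h1.trans (ih (fun v hv => hsupp v (by simp [Walk.support_cons, hv])) hu hb)

lemma aux_walk_support_in_comp {K : Set V} {a b : V} (w : G.Walk a b) :
    (∀ v ∈ w.support, v ∉ K) →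
      ∀ {C : G.ComponentCompl K}, a ∈ C → ∀ v ∈ w.support, v ∈ C := by
  induction w with
  | nil =>
    intro _ C ha v hv
    simp [Walk.support_nil] at hv; subst hv; exact ha
  | @cons a' u' b' adj rest ih =>
    intro hsupp C ha v hv
    have hu : u' ∉ K := hsupp u' (by simp [Walk.support_cons])
    have huC : u' ∈ C := ComponentCompl.mem_of_adj a' u' ha hu adj
    rw [Walk.support_cons] at hv
    rcases List.mem_cons.mp hv with rfl | hv
    · exact ha
    · exact ih (fun x hx => hsupp x (by simp [Walk.support_cons, hx])) huC v hv

lemma aux_induce_walk_out {s : Set V} {x y : s} (w : (G.induce s).Walk x y) :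
    ∃ w' : G.Walk x.1 y.1, ∀ v ∈ w'.support, v ∈ s := by
  induction w with
  | nil =>
    refine ⟨Walk.nil, ?_⟩
    rename_i z
    intro v hv; simp [Walk.support_nil] at hv; subst hv; exact z.2
  | @cons x' u' y' adj rest ih =>
    obtain ⟨w', hw'⟩ := ih
    have hadj : G.Adj x'.1 u'.1 := by simpa using adj
    refine ⟨Walk.cons hadj w', ?_⟩
    intro v hv
    rw [Walk.support_cons] at hv
    rcases List.mem_cons.mp hv with rfl | hv
    · exact x'.2
    · exact hw' v hv

/-- Two vertices in a common component are joined by a walk within the component. -/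
lemma aux_comp_walk {K : Set V} {C : G.ComponentCompl K} {a b : V}
    (ha : a ∈ C) (hb : b ∈ C) :
    ∃ w : G.Walk a b, ∀ v ∈ w.support, v ∈ C := by
  obtain ⟨haK, ea⟩ := ha
  obtain ⟨hbK, eb⟩ := hb
  have hr : (G.induce Kᶜ).Reachable ⟨a, haK⟩ ⟨b, hbK⟩ :=
    (SimpleGraph.ConnectedComponent.eq).mp (ea.trans eb.symm)
  obtain ⟨w₀⟩ := hr
  obtain ⟨w, hw⟩ := aux_induce_walk_out w₀
  have hout : ∀ v ∈ w.support, v ∉ K := fun v hv => hw v hv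
  exact ⟨w, aux_walk_support_in_comp w hout (ea ▸ ⟨haK, rfl⟩)⟩

/-- Truncate a walk at the first vertex satisfying `p` (assuming some support vertex does). -/
lemma aux_walk_first_prop (p : V → Prop) {a b : V} (w : G.Walk a b) :
    (∃ v ∈ w.support, p v) →
      ∃ (c : V) (τ : G.Walk a c), p c ∧ (∀ v ∈ τ.support, v ≠ c → ¬ p v) ∧
        ∀ v ∈ τ.support, v ∈ w.support := by
  induction w with
  | nil =>
    intro hex
    rename_i z
    have hpz : p z := by simpa [Walk.support_nil] using hex
    refine ⟨z, Walk.nil, hpz, ?_, ?_⟩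
    · intro v hv hne; simp [Walk.support_nil] at hv; exact absurd hv hne
    · intro v hv; exact hv
  | @cons a' u' b' adj rest ih =>
    intro hex
    by_cases hpa : p a'
    · refine ⟨a', Walk.nil, hpa, ?_, ?_⟩
      · intro v hv hne; simp [Walk.support_nil] at hv; exact absurd hv hne
      · intro v hv; simp [Walk.support_nil] at hv; subst hv; exact Walk.start_mem_support _
    · have hex' : ∃ v ∈ rest.support, p v := by
        obtain ⟨v, hv, hp⟩ := hex
        rw [Walk.support_cons] at hv
        rcases List.mem_cons.mp hv with rfl | hv
        · exact absurd hp hpa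
        · exact ⟨v, hv, hp⟩
      obtain ⟨c, τ, h1, h2, h3⟩ := ih hex'
      refine ⟨c, Walk.cons adj τ, h1, ?_, ?_⟩
      · intro v hv hne
        rw [Walk.support_cons] at hv
        rcases List.mem_cons.mp hv with rfl | hv
        · exact hpa
        · exact h2 v hv hne
      · intro v hv
        rw [Walk.support_cons] at hv
        rcases List.mem_cons.mp hv with rfl | hv
        · exact Walk.start_mem_support _
        · rw [Walk.support_cons]; exact List.mem_cons.mpr (Or.inr (h3 v hv))

lemma aux_getVert_mem_support {a b : V} (w : G.Walk a b) (i : ℕ) :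
    w.getVert i ∈ w.support := by
  induction w generalizing i with
  | nil => simp [Walk.getVert, Walk.support_nil]
  | @cons a' u' b' adj rest ih =>
    cases i with
    | zero => simp [Walk.support_cons]
    | succ n =>
      rw [Walk.getVert_cons_succ, Walk.support_cons]
      exact List.mem_cons.mpr (Or.inr (ih n))

lemma aux_isPath_getVert_inj {a b : V} (w : G.Walk a b) (hw : w.IsPath) :
    ∀ {i j : ℕ}, i ≤ w.length → j ≤ w.length → w.getVert i = w.getVert j → i = j := by
  induction w with
  | nil => intro i j hi hj _; simp [Walk.length] at hi hj; omega
  | @cons a' u' b' adj rest ih =>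
    intro i j hi hj hij
    have hrest : rest.IsPath := hw.of_cons
    have hnot : a' ∉ rest.support := by
      have := hw.support_nodup
      rw [Walk.support_cons] at this
      exact (List.nodup_cons.mp this).1
    cases i with
    | zero =>
      cases j with
      | zero => rfl
      | succ m =>
        exfalso
        rw [Walk.getVert_zero, Walk.getVert_cons_succ] at hij
        exact hnot (hij ▸ aux_getVert_mem_support rest m)
    | succ n =>
      cases j with
      | zero =>
        exfalso
        rw [Walk.getVert_zero, Walk.getVert_cons_succ] at hij
        exact hnot (hij ▸ aux_getVert_mem_support rest n)
      | succ m =>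
        rw [Walk.getVert_cons_succ, Walk.getVert_cons_succ] at hij
        have := ih hrest (by simpa [Walk.length_cons] using hi)
          (by simpa [Walk.length_cons] using hj) hij
        omega

end CompBasics
section RayBasics

variable {V : Type u} {G : SimpleGraph V}

namespace Ray

lemma tailIn_mono {R : Ray G} {s t : Set V} (h : R.TailIn s) (hst : s ⊆ t) : R.TailIn t := by
  obtain ⟨N, hN⟩ := h
  exact ⟨N, fun n hn => hst (hN n hn)⟩

lemma exists_escape (R : Ray G) (K : Finset V) :
    ∃ N, ∀ n, N ≤ n → R.f n ∉ (K : Set V) := by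
  have hfin : {n : ℕ | R.f n ∈ (K : Set V)}.Finite :=
    Set.Finite.preimage (Set.injOn_of_injective R.inj) K.finite_toSet
  obtain ⟨N, hN⟩ := hfin.bddAbove
  exact ⟨N + 1, fun n hn hmem => by have := hN hmem; omega⟩

lemma chain_comp (R : Ray G) {K : Set V} {s : ℕ} (hs : ∀ i, s ≤ i → R.f i ∉ K) :
    ∀ t (ht : s ≤ t), G.componentComplMk (hs t ht) = G.componentComplMk (hs s le_rfl) := by
  intro t ht
  induction t, ht using Nat.le_induction with
  | base => rfl
  | succ n hn ih =>
    have h1 : G.componentComplMk (hs (n+1) (by omega)) = G.componentComplMk (hs n hn) :=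
      (G.componentComplMk_eq_of_adj (hs n hn) (hs (n+1) (by omega)) (R.adj n)).symm
    exact h1.trans ih

lemma mem_chain_comp (R : Ray G) {K : Set V} {s : ℕ} (hs : ∀ i, s ≤ i → R.f i ∉ K)
    {t : ℕ} (ht : s ≤ t) : R.f t ∈ G.componentComplMk (hs s le_rfl) :=
  ⟨hs t ht, R.chain_comp hs t ht⟩

/-- The component of `G - K` containing the tail of `R`. -/
noncomputable def tailComp (R : Ray G) (K : Finset V) : G.ComponentCompl (K : Set V) :=
  G.componentComplMk ((R.exists_escape K).choose_spec _ le_rfl)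

lemma tailIn_tailComp (R : Ray G) (K : Finset V) :
    R.TailIn (R.tailComp K : Set V) :=
  ⟨(R.exists_escape K).choose, fun n hn =>
    R.mem_chain_comp (R.exists_escape K).choose_spec hn⟩

lemma tailIn_unique {R : Ray G} {K : Finset V} {C D : G.ComponentCompl (K : Set V)}
    (hC : R.TailIn (C : Set V)) (hD : R.TailIn (D : Set V)) : C = D := by
  obtain ⟨N₁, h₁⟩ := hC
  obtain ⟨N₂, h₂⟩ := hD
  exact aux_mem_comp_unique (h₁ (max N₁ N₂) (le_max_left _ _)) (h₂ (max N₁ N₂) (le_max_right _ _))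

lemma tailIn_iff {R : Ray G} {K : Finset V} {C : G.ComponentCompl (K : Set V)} :
    R.TailIn (C : Set V) ↔ C = R.tailComp K :=
  ⟨fun h => tailIn_unique h (R.tailIn_tailComp K),
   fun h => h ▸ R.tailIn_tailComp K⟩

lemma mem_initSeg_iff {R : Ray G} {v : V} {n : ℕ} :
    v ∈ R.initSeg n ↔ ∃ i < n, R.f i = v := by
  simp [Ray.initSeg]

lemma rf_mem_initSeg_iff {R : Ray G} {i n : ℕ} :
    R.f i ∈ R.initSeg n ↔ i < n := by
  rw [mem_initSeg_iff]
  constructor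
  · rintro ⟨j, hj, hji⟩
    rwa [R.inj hji] at hj
  · intro h; exact ⟨i, h, rfl⟩

lemma initSeg_mono {R : Ray G} {m n : ℕ} (h : m ≤ n) : R.initSeg m ⊆ R.initSeg n := by
  intro v hv
  rw [mem_initSeg_iff] at hv ⊢
  obtain ⟨i, hi, hiv⟩ := hv
  exact ⟨i, by omega, hiv⟩

lemma initSeg_subset_range {R : Ray G} {n : ℕ} :
    ((R.initSeg n : Finset V) : Set V) ⊆ Set.range R.f := by
  intro v hv
  obtain ⟨i, _, hiv⟩ := mem_initSeg_iff.mp hv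
  exact ⟨i, hiv⟩

lemma escape_initSeg (R : Ray G) (m : ℕ) :
    ∀ i, m ≤ i → R.f i ∉ ((R.initSeg m : Finset V) : Set V) := by
  intro i hi hmem
  rw [Finset.mem_coe, rf_mem_initSeg_iff] at hmem
  omega

lemma tailComp_initSeg_eq (R : Ray G) (m : ℕ) :
    R.tailComp (R.initSeg m) = G.componentComplMk ((R.escape_initSeg m) m le_rfl) := by
  symm
  rw [← tailIn_iff]
  exact ⟨m, fun n hn => R.mem_chain_comp (R.escape_initSeg m) hn⟩

lemma rf_mem_tailComp_initSeg (R : Ray G) {m t : ℕ} (h : m ≤ t) :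
    R.f t ∈ R.tailComp (R.initSeg m) := by
  rw [R.tailComp_initSeg_eq m]
  exact R.mem_chain_comp (R.escape_initSeg m) h

lemma tailComp_subset (R : Ray G) {K L : Finset V} (h : K ⊆ L) :
    ((R.tailComp L : G.ComponentCompl (L : Set V)) : Set V) ⊆ (R.tailComp K : Set V) := by
  have hsub : (K : Set V) ⊆ (L : Set V) := Finset.coe_subset.mpr h
  have he : (R.tailComp L).hom hsub = R.tailComp K := by
    rw [← tailIn_iff]
    exact tailIn_mono (R.tailIn_tailComp L) ((R.tailComp L).subset_hom hsub)
  rw [← he]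
  exact (R.tailComp L).subset_hom hsub

lemma rayEquiv_refl (R : Ray G) : RayEquiv G R R :=
  fun K => ⟨R.tailComp K, R.tailIn_tailComp K, R.tailIn_tailComp K⟩

lemma mem_own_end (R : Ray G) : R ∈ (R.end G).1 :=
  R.rayEquiv_refl

end Ray

/-- `LivesIn` in terms of the tail component of a representative. -/
lemma livesIn_iff_rep {η : Ends G} {R₀ : Ray G} (hrep : η.1 = {S : Ray G | RayEquiv G R₀ S})
    {K : Finset V} {C : G.ComponentCompl (K : Set V)} :
    LivesIn η K C ↔ C = R₀.tailComp K := by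
  constructor
  · intro h
    have hR₀ : R₀ ∈ η.1 := by rw [hrep]; exact R₀.rayEquiv_refl
    exact Ray.tailIn_iff.mp (h R₀ hR₀)
  · rintro rfl S hS
    rw [hrep] at hS
    obtain ⟨D, hRD, hSD⟩ := hS K
    rw [Ray.tailIn_iff.mp hRD] at hSD
    exact hSD

lemma livesIn_self_iff {R : Ray G} {K : Finset V} {C : G.ComponentCompl (K : Set V)} :
    LivesIn (R.end G) K C ↔ C = R.tailComp K :=
  livesIn_iff_rep rfl

lemma livesIn_mono {η : Ends G} {K L : Finset V} (hKL : K ⊆ L) {R₀ : Ray G}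
    (h : LivesIn η L (R₀.tailComp L)) : LivesIn η K (R₀.tailComp K) := by
  intro S hS
  exact Ray.tailIn_mono (h S hS) (R₀.tailComp_subset hKL)

end RayBasics

section DirBasics

variable {V : Type u} {G : SimpleGraph V}

lemma dirComp_hom (h : G.end) {K L : Finset V} (hKL : K ⊆ L) :
    (dirComp h L).hom (Finset.coe_subset.mpr hKL) = dirComp h K := by
  have := h.2 ((CategoryTheory.homOfLE hKL).op)
  exact this

lemma dirComp_subset (h : G.end) {K L : Finset V} (hKL : K ⊆ L) :
    ((dirComp h L : G.ComponentCompl (L : Set V)) : Set V) ⊆ (dirComp h K : Set V) := by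
  rw [← dirComp_hom h hKL]
  exact (dirComp h L).subset_hom _

/-- The direction induced by (a representative ray of) an end. -/
noncomputable def endDir (R₀ : Ray G) : G.end := by
  refine ⟨fun K => R₀.tailComp K.unop, ?_⟩
  intro j j' g
  have hsub : j'.unop ≤ j.unop := CategoryTheory.le_of_op_hom g
  show ((componentComplFunctor G).map g) (R₀.tailComp j.unop) = R₀.tailComp j'.unop
  have : ∀ x, (componentComplFunctor G).map g x = ComponentCompl.hom (Finset.coe_subset.mpr hsub) x := fun _ => rfl
  refine (this (R₀.tailComp j.unop)).trans ?_
  exact Ray.tailIn_iff.mp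
    (Ray.tailIn_mono (R₀.tailIn_tailComp j.unop) ((R₀.tailComp j.unop).subset_hom _))

lemma endDir_dirComp (R₀ : Ray G) (K : Finset V) :
    dirComp (endDir R₀) K = R₀.tailComp K := rfl

end DirBasics
section DirRay

variable {V : Type u} {G : SimpleGraph V}

lemma dir_step (h : G.end) (T : Finset V) {a : V} (ha : a ∈ (dirComp h T : Set V)) :
    ∃ (b : V) (w : G.Walk a b), w.IsPath ∧
      (∀ v ∈ w.support, v ∈ (dirComp h T : Set V)) ∧
      b ∈ (dirComp h (insert a T) : Set V) ∧
      (∀ v ∈ w.support, v ≠ b → v ∉ (dirComp h (insert a T) : Set V)) := by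
  have hsub : T ⊆ insert a T := Finset.subset_insert a T
  obtain ⟨c, hc⟩ := (dirComp h (insert a T)).nonempty
  have hc' : c ∈ (dirComp h T : Set V) := dirComp_subset h hsub hc
  obtain ⟨w₀, hw₀⟩ := aux_comp_walk ha hc'
  obtain ⟨b, τ, h1, h2, h3⟩ :=
    aux_walk_first_prop (fun v => v ∈ (dirComp h (insert a T) : Set V)) w₀
      ⟨c, Walk.end_mem_support _, hc⟩
  refine ⟨b, τ.bypass, τ.bypass_isPath, ?_, h1, ?_⟩
  · intro v hv; exact hw₀ v (h3 v (τ.support_bypass_subset hv))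
  · intro v hv hne; exact h2 v (τ.support_bypass_subset hv) hne

noncomputable def dirSeq (h : G.end) (Y : Finset V) :
    ℕ → Σ' (T : Finset V) (a : V), a ∈ (dirComp h T : Set V)
  | 0 => ⟨Y, ((dirComp h Y).nonempty).choose, ((dirComp h Y).nonempty).choose_spec⟩
  | n + 1 =>
    ⟨insert (dirSeq h Y n).2.1 (dirSeq h Y n).1,
      (dir_step h (dirSeq h Y n).1 (dirSeq h Y n).2.2).choose,
      (((dir_step h (dirSeq h Y n).1 (dirSeq h Y n).2.2).choose_spec).choose_spec).2.2.1⟩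

noncomputable def dirWalk (h : G.end) (Y : Finset V) (n : ℕ) :
    G.Walk (dirSeq h Y n).2.1 (dirSeq h Y (n+1)).2.1 :=
  (dir_step h (dirSeq h Y n).1 (dirSeq h Y n).2.2).choose_spec.choose

lemma dirSeq_succ_fst (h : G.end) (Y : Finset V) (n : ℕ) :
    (dirSeq h Y (n+1)).1 = insert (dirSeq h Y n).2.1 (dirSeq h Y n).1 := rfl

lemma dirSeq_zero_fst (h : G.end) (Y : Finset V) : (dirSeq h Y 0).1 = Y := rfl

lemma dirWalk_spec (h : G.end) (Y : Finset V) (n : ℕ) :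
    (dirWalk h Y n).IsPath ∧
      (∀ v ∈ (dirWalk h Y n).support, v ∈ (dirComp h (dirSeq h Y n).1 : Set V)) ∧
      (dirSeq h Y (n+1)).2.1 ∈ (dirComp h (dirSeq h Y (n+1)).1 : Set V) ∧
      (∀ v ∈ (dirWalk h Y n).support, v ≠ (dirSeq h Y (n+1)).2.1 →
        v ∉ (dirComp h (dirSeq h Y (n+1)).1 : Set V)) :=
  (dir_step h (dirSeq h Y n).1 (dirSeq h Y n).2.2).choose_spec.choose_spec

lemma dirSeq_fst_mono (h : G.end) (Y : Finset V) {m n : ℕ} (hmn : m ≤ n) :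
    (dirSeq h Y m).1 ⊆ (dirSeq h Y n).1 := by
  induction n, hmn using Nat.le_induction with
  | base => exact subset_rfl
  | succ n hn ih =>
    refine ih.trans ?_
    rw [dirSeq_succ_fst]
    exact Finset.subset_insert _ _

lemma dirWalk_length_pos (h : G.end) (Y : Finset V) (n : ℕ) :
    0 < (dirWalk h Y n).length := by
  rcases Nat.eq_zero_or_pos (dirWalk h Y n).length with h0 | h0
  · exfalso
    have hend : (dirSeq h Y n).2.1 = (dirSeq h Y (n+1)).2.1 :=
      Walk.eq_of_length_eq_zero h0
    have h1 : (dirSeq h Y (n+1)).2.1 ∈ (dirComp h (dirSeq h Y (n+1)).1 : Set V) :=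
      (dirWalk_spec h Y n).2.2.1
    have h2 : (dirSeq h Y n).2.1 ∈ ((dirSeq h Y (n+1)).1 : Set V) := by
      rw [dirSeq_succ_fst]
      simp
    rw [hend] at h2
    exact ComponentCompl.notMem_of_mem h1 h2
  · exact h0

end DirRay
section Flatten

variable {V : Type u} {G : SimpleGraph V}

/-- Cumulative offsets of the concatenated walks. -/
noncomputable def dirOff (h : G.end) (Y : Finset V) (n : ℕ) : ℕ :=
  ∑ i ∈ Finset.range n, (dirWalk h Y i).length

lemma dirOff_zero (h : G.end) (Y : Finset V) : dirOff h Y 0 = 0 := by simp [dirOff]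

lemma dirOff_succ (h : G.end) (Y : Finset V) (n : ℕ) :
    dirOff h Y (n+1) = dirOff h Y n + (dirWalk h Y n).length := by
  simp [dirOff, Finset.sum_range_succ]

lemma dirOff_strictMono (h : G.end) (Y : Finset V) : StrictMono (dirOff h Y) := by
  apply strictMono_nat_of_lt_succ
  intro n
  rw [dirOff_succ]
  have := dirWalk_length_pos h Y n
  omega

open Classical in
/-- The block index of position `k`. -/
noncomputable def dirIdx (h : G.end) (Y : Finset V) (k : ℕ) : ℕ :=
  Nat.findGreatest (fun n => dirOff h Y n ≤ k) k

lemma dirIdx_spec (h : G.end) (Y : Finset V) (k : ℕ) :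
    dirOff h Y (dirIdx h Y k) ≤ k ∧ k < dirOff h Y (dirIdx h Y k + 1) := by
  classical
  have h0 : dirOff h Y 0 ≤ k := by rw [dirOff_zero]; omega
  have hle : dirOff h Y (dirIdx h Y k) ≤ k :=
    Nat.findGreatest_spec (P := fun n => dirOff h Y n ≤ k) (Nat.zero_le k) h0
  refine ⟨hle, ?_⟩
  by_contra hcon
  push_neg at hcon
  have hbig : dirIdx h Y k + 1 ≤ k := by
    have : dirIdx h Y k + 1 ≤ dirOff h Y (dirIdx h Y k + 1) := by
      have h1 : ∀ m, m ≤ dirOff h Y m := by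
        intro m
        induction m with
        | zero => omega
        | succ m ih =>
          have := dirWalk_length_pos h Y m
          rw [dirOff_succ]
          omega
      exact h1 _
    omega
  exact Nat.findGreatest_is_greatest (lt_add_one _) hbig hcon

lemma dirIdx_eq (h : G.end) (Y : Finset V) {k n : ℕ}
    (h1 : dirOff h Y n ≤ k) (h2 : k < dirOff h Y (n+1)) : dirIdx h Y k = n := by
  classical
  have hnk : n ≤ k := le_trans (by
    have h1' : ∀ m, m ≤ dirOff h Y m := by
      intro m
      induction m with
      | zero => omega
      | succ m ih =>
        have := dirWalk_length_pos h Y m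
        rw [dirOff_succ]
        omega
    exact h1' n) h1
  have hge : n ≤ dirIdx h Y k := Nat.le_findGreatest hnk h1
  rcases Nat.lt_or_ge (dirIdx h Y k) (n+1) with hlt | hge'
  · omega
  · exfalso
    have := (dirIdx_spec h Y k).1
    have hmono := dirOff_strictMono h Y
    have : dirOff h Y (n+1) ≤ dirOff h Y (dirIdx h Y k) := hmono.monotone hge'
    omega

lemma dirIdx_mono (h : G.end) (Y : Finset V) {k k' : ℕ} (hk : k ≤ k') :
    dirIdx h Y k ≤ dirIdx h Y k' := by
  classical
  exact Nat.le_findGreatest (le_trans (Nat.findGreatest_le k) hk)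
    (le_trans (dirIdx_spec h Y k).1 hk)

/-- The actual ray function. -/
noncomputable def dirFun (h : G.end) (Y : Finset V) (k : ℕ) : V :=
  (dirWalk h Y (dirIdx h Y k)).getVert (k - dirOff h Y (dirIdx h Y k))

lemma dirFun_lt_len (h : G.end) (Y : Finset V) (k : ℕ) :
    k - dirOff h Y (dirIdx h Y k) < (dirWalk h Y (dirIdx h Y k)).length := by
  obtain ⟨h1, h2⟩ := dirIdx_spec h Y k
  rw [dirOff_succ] at h2
  omega

lemma dirFun_mem_support (h : G.end) (Y : Finset V) (k : ℕ) :
    dirFun h Y k ∈ (dirWalk h Y (dirIdx h Y k)).support :=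
  aux_getVert_mem_support _ _

lemma dirFun_adj (h : G.end) (Y : Finset V) (k : ℕ) :
    G.Adj (dirFun h Y k) (dirFun h Y (k+1)) := by
  set n := dirIdx h Y k with hn
  obtain ⟨h1, h2⟩ := dirIdx_spec h Y k
  rw [← hn] at h1 h2
  have hjlen : k - dirOff h Y n < (dirWalk h Y n).length := dirFun_lt_len h Y k
  rcases Nat.lt_or_ge (k+1) (dirOff h Y (n+1)) with hlt | hge
  · -- stay in the same block
    have hidx : dirIdx h Y (k+1) = n := dirIdx_eq h Y (by omega) hlt
    have : dirFun h Y (k+1) = (dirWalk h Y n).getVert (k + 1 - dirOff h Y n) := by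
      rw [dirFun, hidx]
    rw [this]
    have harith : k + 1 - dirOff h Y n = (k - dirOff h Y n) + 1 := by omega
    rw [harith]
    exact Walk.adj_getVert_succ _ hjlen
  · -- move to the next block
    have hk1 : k + 1 = dirOff h Y (n+1) := by omega
    have hidx : dirIdx h Y (k+1) = n + 1 := by
      apply dirIdx_eq h Y (by omega)
      rw [dirOff_succ h Y (n+1)]
      have := dirWalk_length_pos h Y (n+1)
      omega
    have hnext : dirFun h Y (k+1) = (dirSeq h Y (n+1)).2.1 := by
      rw [dirFun, hidx]
      have : k + 1 - dirOff h Y (n+1) = 0 := by omega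
      rw [this, Walk.getVert_zero]
    rw [hnext]
    have hlast : (dirSeq h Y (n+1)).2.1 = (dirWalk h Y n).getVert ((k - dirOff h Y n) + 1) := by
      have harith : (k - dirOff h Y n) + 1 = (dirWalk h Y n).length := by
        rw [dirOff_succ] at hk1
        omega
      rw [harith, Walk.getVert_length]
    rw [hlast]
    exact Walk.adj_getVert_succ _ hjlen

lemma dirFun_mem (h : G.end) (Y : Finset V) (k : ℕ) :
    dirFun h Y k ∈ (dirComp h Y : Set V) := by
  have h1 : dirFun h Y k ∈ (dirComp h (dirSeq h Y (dirIdx h Y k)).1 : Set V) :=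
    (dirWalk_spec h Y (dirIdx h Y k)).2.1 _ (dirFun_mem_support h Y k)
  have h2 : Y ⊆ (dirSeq h Y (dirIdx h Y k)).1 := by
    rw [← dirSeq_zero_fst h Y]
    exact dirSeq_fst_mono h Y (Nat.zero_le _)
  exact dirComp_subset h h2 h1

lemma dirFun_inj (h : G.end) (Y : Finset V) : Function.Injective (dirFun h Y) := by
  have key : ∀ k k' : ℕ, k < k' → dirFun h Y k = dirFun h Y k' → False := by
    intro k k' hkk' heq0
    obtain ⟨n, hn⟩ : ∃ n, dirIdx h Y k = n := ⟨_, rfl⟩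
    obtain ⟨n', hn'⟩ : ∃ n', dirIdx h Y k' = n' := ⟨_, rfl⟩
    have heq : (dirWalk h Y n).getVert (k - dirOff h Y n) =
        (dirWalk h Y n').getVert (k' - dirOff h Y n') := by
      rw [← hn, ← hn']; exact heq0
    have hnn' : n ≤ n' := hn ▸ hn' ▸ dirIdx_mono h Y (le_of_lt hkk')
    have hjlen : k - dirOff h Y n < (dirWalk h Y n).length := hn ▸ dirFun_lt_len h Y k
    have hjlen' : k' - dirOff h Y n' < (dirWalk h Y n').length := hn' ▸ dirFun_lt_len h Y k'
    have hoff : dirOff h Y n ≤ k := hn ▸ (dirIdx_spec h Y k).1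
    have hoff' : dirOff h Y n' ≤ k' := hn' ▸ (dirIdx_spec h Y k').1
    rcases eq_or_lt_of_le hnn' with rfl | hlt
    · have hinj := aux_isPath_getVert_inj _ (dirWalk_spec h Y n).1
        (le_of_lt hjlen) (le_of_lt hjlen') heq
      omega
    · have hmem' : (dirWalk h Y n').getVert (k' - dirOff h Y n') ∈
          (dirComp h (dirSeq h Y (n+1)).1 : Set V) :=
        dirComp_subset h (dirSeq_fst_mono h Y hlt)
          ((dirWalk_spec h Y n').2.1 _ (aux_getVert_mem_support _ _))
      by_cases hend : (dirWalk h Y n).getVert (k - dirOff h Y n) = (dirSeq h Y (n+1)).2.1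
      · have h2 : (dirWalk h Y n).getVert (k - dirOff h Y n) =
            (dirWalk h Y n).getVert (dirWalk h Y n).length := by
          rw [Walk.getVert_length]; exact hend
        have := aux_isPath_getVert_inj _ (dirWalk_spec h Y n).1
          (le_of_lt hjlen) le_rfl h2
        omega
      · have hnot := (dirWalk_spec h Y n).2.2.2 _ (aux_getVert_mem_support _ _) hend
        rw [heq] at hnot
        exact hnot hmem'
  intro k k' heq
  rcases lt_trichotomy k k' with hlt | rfl | hlt
  · exact absurd heq (fun e => key _ _ hlt e)
  · rfl
  · exact absurd heq.symm (fun e => key _ _ hlt e)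

/-- A ray all whose vertices lie in the component `dirComp h Y`. -/
noncomputable def dirRay (h : G.end) (Y : Finset V) : Ray G :=
  ⟨dirFun h Y, dirFun_inj h Y, dirFun_adj h Y⟩

lemma dirRay_mem (h : G.end) (Y : Finset V) (k : ℕ) :
    (dirRay h Y).f k ∈ (dirComp h Y : Set V) := dirFun_mem h Y k

end Flatten
section Backward

variable {V : Type u} {G : SimpleGraph V}

lemma basicSet_isOpen (X : Finset V) (C : G.ComponentCompl (X : Set V)) :
    IsOpen (basicSet G X C) :=
  TopologicalSpace.GenerateOpen.basic _ ⟨X, C, rfl⟩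

lemma topological_to_directional {R : Ray G} (ht : Topological R) : Directional R := by
  intro h hex
  obtain ⟨X, hX⟩ := hex
  by_contra hcon
  push_neg at hcon
  have hXne : dirComp h X ≠ R.tailComp X := fun e => hX (e ▸ R.tailIn_tailComp X)
  have hmem : R.end G ∈ basicSet G X (R.tailComp X) := by
    show LivesIn (R.end G) X (R.tailComp X)
    exact livesIn_self_iff.mpr rfl
  obtain ⟨n, C, hC, hsub⟩ := ht _ (basicSet_isOpen X (R.tailComp X)) hmem
  have hCeq : C = R.tailComp (R.initSeg n) := livesIn_self_iff.mp hC
  set K := X ∪ R.initSeg n with hK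
  set S := dirRay h K with hS
  have hSK : ∀ k, S.f k ∈ (dirComp h K : Set V) := dirRay_mem h K
  have hSX : ∀ k, S.f k ∈ (dirComp h X : Set V) := fun k =>
    dirComp_subset h Finset.subset_union_left (hSK k)
  have hSn : ∀ k, S.f k ∈ (dirComp h (R.initSeg n) : Set V) := fun k =>
    dirComp_subset h Finset.subset_union_right (hSK k)
  have hdirn : dirComp h (R.initSeg n) = R.tailComp (R.initSeg n) :=
    Ray.tailIn_iff.mp (hcon n)
  have hS1 : S.end G ∈ basicSet G (R.initSeg n) C := by
    rw [hCeq]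
    intro S' hS'
    have hS'' : RayEquiv G S S' := hS'
    obtain ⟨D, hSD, hS'D⟩ := hS'' (R.initSeg n)
    have h1 : S.TailIn ((R.tailComp (R.initSeg n)) : Set V) := by
      rw [← hdirn]; exact ⟨0, fun k _ => hSn k⟩
    have hD : D = R.tailComp (R.initSeg n) := Ray.tailIn_unique hSD h1
    exact hD ▸ hS'D
  have hS2 : LivesIn (S.end G) X (R.tailComp X) := hsub hS1
  have hS3 : S.TailIn ((R.tailComp X) : Set V) := hS2 S S.mem_own_end
  have hS4 : S.TailIn ((dirComp h X) : Set V) := ⟨0, fun k _ => hSX k⟩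
  exact hXne (Ray.tailIn_unique hS4 hS3)

end Backward
section Forward

variable {V : Type u} {G : SimpleGraph V}

lemma livesIn_initSeg_mono (R : Ray G) {η : Ends G} {m m' : ℕ} (hmm' : m ≤ m')
    (hl : LivesIn η (R.initSeg m') (R.tailComp (R.initSeg m'))) :
    LivesIn η (R.initSeg m) (R.tailComp (R.initSeg m)) := by
  obtain ⟨R₀, hrep⟩ := η.2
  rw [livesIn_iff_rep hrep] at hl ⊢
  have h1 : R₀.TailIn ((R.tailComp (R.initSeg m)) : Set V) := by
    have h2 : R₀.TailIn ((R.tailComp (R.initSeg m')) : Set V) := by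
      rw [hl]; exact R₀.tailIn_tailComp _
    exact Ray.tailIn_mono h2 (R.tailComp_subset (Ray.initSeg_mono hmm'))
  exact Ray.tailIn_iff.mp h1

/-- The key combinatorial lemma: if `R` is directional then for every finite `X` some
initial segment works. -/
lemma core_lemma {R : Ray G} (hdir : Directional R) (X : Finset V) :
    ∃ n, ∀ η : Ends G, LivesIn η (R.initSeg n) (R.tailComp (R.initSeg n)) →
      LivesIn η X (R.tailComp X) := by
  classical
  by_contra h0
  push_neg at h0
  obtain ⟨t₁, ht₁⟩ := R.tailIn_tailComp X
  by_cases hA : ∃ η : Ends G,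
      (∀ m, LivesIn η (R.initSeg m) (R.tailComp (R.initSeg m))) ∧ ¬ LivesIn η X (R.tailComp X)
  · -- an end agreeing with `R` on all initial segments but not at `X`:
    -- its direction contradicts `Directional`.
    obtain ⟨η, hη1, hη2⟩ := hA
    obtain ⟨R₀, hrep⟩ := η.2
    have hne : R₀.tailComp X ≠ R.tailComp X := fun e =>
      hη2 ((livesIn_iff_rep hrep).mpr e.symm)
    have hpre : ∃ K : Finset V, ¬ R.TailIn ((dirComp (endDir R₀) K) : Set V) := by
      refine ⟨X, fun hT => ?_⟩
      rw [endDir_dirComp] at hT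
      exact hne (Ray.tailIn_unique hT (R.tailIn_tailComp X))
    obtain ⟨n, hn⟩ := hdir (endDir R₀) hpre
    apply hn
    rw [endDir_dirComp]
    have he : R.tailComp (R.initSeg n) = R₀.tailComp (R.initSeg n) :=
      (livesIn_iff_rep hrep).mp (hη1 n)
    rw [← he]
    exact R.tailIn_tailComp _
  · push_neg at hA
    -- every bad end "breaks" at some initial segment; extract the break data
    set Q : ℕ → V → Prop := fun b x =>
      x ∈ X ∧ x ∉ Set.range R.f ∧
        ∃ (v : V) (E : G.ComponentCompl ((R.initSeg b : Finset V) : Set V)) (τ : G.Walk v x),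
          v ∈ E ∧ E ≠ R.tailComp (R.initSeg b) ∧
          (∀ u ∈ τ.support, u ∈ ((R.tailComp (R.initSeg (b - 1))) : Set V)) ∧
          (∀ u ∈ τ.support, u ∉ Set.range R.f) with hQ
    have main : ∀ n, t₁ ≤ n → ∃ b, n < b ∧ ∃ x, Q b x := by
      intro n hn
      obtain ⟨η, hgood, hbad⟩ := h0 n
      obtain ⟨R₀, hrep⟩ := η.2
      have hbreak : ∃ m, ¬ LivesIn η (R.initSeg m) (R.tailComp (R.initSeg m)) := by
        by_contra hc
        push_neg at hc
        exact hbad (hA η hc)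
      set b := Nat.find hbreak with hbdef
      have hb : ¬ LivesIn η (R.initSeg b) (R.tailComp (R.initSeg b)) := Nat.find_spec hbreak
      have hmin : ∀ m, m < b → LivesIn η (R.initSeg m) (R.tailComp (R.initSeg m)) :=
        fun m hm => not_not.mp (Nat.find_min hbreak hm)
      have hnb : n < b := by
        by_contra hc
        push_neg at hc
        exact hb (livesIn_initSeg_mono R hc hgood)
      have hEne : R₀.tailComp (R.initSeg b) ≠ R.tailComp (R.initSeg b) := fun e =>
        hb ((livesIn_iff_rep hrep).mpr e.symm)
      have hDne : R₀.tailComp X ≠ R.tailComp X := fun e =>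
        hbad ((livesIn_iff_rep hrep).mpr e.symm)
      have hprev : R.tailComp (R.initSeg (b - 1)) = R₀.tailComp (R.initSeg (b - 1)) :=
        (livesIn_iff_rep hrep).mp (hmin (b - 1) (by omega))
      -- a common point of the tail of R₀
      obtain ⟨N1, hN1⟩ : R₀.TailIn ((R.tailComp (R.initSeg (b - 1))) : Set V) := by
        rw [hprev]; exact R₀.tailIn_tailComp _
      obtain ⟨N2, hN2⟩ := R₀.tailIn_tailComp (R.initSeg b)
      obtain ⟨N3, hN3⟩ := R₀.tailIn_tailComp X
      set N := max N1 (max N2 N3) with hNdef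
      set v := R₀.f N with hvdef
      have hv1 : v ∈ ((R.tailComp (R.initSeg (b - 1))) : Set V) := hN1 N (le_max_left _ _)
      have hv2 : v ∈ R₀.tailComp (R.initSeg b) :=
        hN2 N (le_trans (le_max_left _ _) (le_max_right _ _))
      have hv3 : v ∈ R₀.tailComp X :=
        hN3 N (le_trans (le_max_right _ _) (le_max_right _ _))
      -- the walk towards R
      have htarget : R.f (b - 1) ∈ R.tailComp (R.initSeg (b - 1)) :=
        R.rf_mem_tailComp_initSeg le_rfl
      obtain ⟨w₀, hw₀⟩ := aux_comp_walk hv1 htarget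
      obtain ⟨c, τ, hpc, hnotp, hsupsub⟩ :=
        aux_walk_first_prop (fun u => u ∈ (X : Set V) ∨ u ∈ Set.range R.f) w₀
          ⟨R.f (b - 1), Walk.end_mem_support _, Or.inr ⟨b - 1, rfl⟩⟩
      have hsupcomp : ∀ u ∈ τ.support, u ∈ ((R.tailComp (R.initSeg (b - 1))) : Set V) :=
        fun u hu => hw₀ u (hsupsub u hu)
      have hcX : c ∈ (X : Set V) := by
        by_contra hcX
        have hcR : c ∈ Set.range R.f := hpc.resolve_left hcX
        obtain ⟨s, hs⟩ := hcR
        have hcmem : c ∈ ((R.tailComp (R.initSeg (b - 1))) : Set V) :=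
          hsupcomp c (Walk.end_mem_support _)
        have hsge : b - 1 ≤ s := by
          by_contra hslt
          push_neg at hslt
          have : c ∈ ((R.initSeg (b - 1) : Finset V) : Set V) := by
            rw [← hs]
            exact Finset.mem_coe.mpr (Ray.rf_mem_initSeg_iff.mpr hslt)
          exact ComponentCompl.notMem_of_mem hcmem this
        have hcCX : c ∈ R.tailComp X := by
          rw [← hs]
          exact ht₁ s (by omega)
        -- τ avoids X entirely
        have hτX : ∀ u ∈ τ.support, u ∉ (X : Set V) := by
          intro u hu
          by_cases huc : u = c
          · rw [huc]; exact hcX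
          · intro huX
            exact (hnotp u hu huc) (Or.inl huX)
        have hvX : v ∉ (X : Set V) := ComponentCompl.notMem_of_mem hv3
        have hcXc : c ∉ (X : Set V) := hcX
        have hsame := aux_walk_same_comp τ hτX hvX hcXc
        obtain ⟨hv3', ev⟩ := hv3
        obtain ⟨hc', ec⟩ := hcCX
        exact hDne (by
          rw [← ev, hsame, ec])
      have hcR : c ∉ Set.range R.f := by
        rintro ⟨s, hs⟩
        have hcmem : c ∈ ((R.tailComp (R.initSeg (b - 1))) : Set V) :=
          hsupcomp c (Walk.end_mem_support _)
        have hsge : b - 1 ≤ s := by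
          by_contra hslt
          push_neg at hslt
          have : c ∈ ((R.initSeg (b - 1) : Finset V) : Set V) := by
            rw [← hs]
            exact Finset.mem_coe.mpr (Ray.rf_mem_initSeg_iff.mpr hslt)
          exact ComponentCompl.notMem_of_mem hcmem this
        have hcCX : c ∈ R.tailComp X := by
          rw [← hs]
          exact ht₁ s (by omega)
        exact ComponentCompl.notMem_of_mem hcCX hcX
      refine ⟨b, hnb, c, Finset.mem_coe.mp hcX, hcR, v, R₀.tailComp (R.initSeg b), τ,
        hv2, hEne, hsupcomp, ?_⟩
      intro u hu
      by_cases huc : u = c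
      · rw [huc]; exact hcR
      · intro huR
        exact (hnotp u hu huc) (Or.inr huR)
    -- pigeonhole: one vertex of X works for arbitrarily large b
    have pigeon : ∃ x, ∀ N, ∃ b, N ≤ b ∧ Q b x := by
      by_contra hP
      push_neg at hP
      choose g hg using hP
      obtain ⟨b, hb1, x, hx⟩ := main (max t₁ (X.sup g)) (le_max_left _ _)
      have hxX : x ∈ X := hx.1
      have hgx : g x ≤ X.sup g := Finset.le_sup hxX
      have : max t₁ (X.sup g) < b := hb1
      exact hg x b (by
        have := le_max_right t₁ (X.sup g)
        omega) hx
    obtain ⟨x, hx⟩ := pigeon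
    obtain ⟨b₀, hb₀, hQ₀⟩ := hx 0
    obtain ⟨b₁, hb₁, hQ₁⟩ := hx (b₀ + 1)
    obtain ⟨hxX, hxR, v₀, E₀, τ₀, hv₀E, hE₀ne, hsup₀, hsupR₀⟩ := hQ₀
    obtain ⟨-, -, v₁, E₁, τ₁, hv₁E, hE₁ne, hsup₁, hsupR₁⟩ := hQ₁
    have hxC : x ∈ ((R.tailComp (R.initSeg b₀)) : Set V) := by
      have h1 : x ∈ ((R.tailComp (R.initSeg (b₁ - 1))) : Set V) :=
        hsup₁ x (Walk.end_mem_support _)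
      exact R.tailComp_subset (Ray.initSeg_mono (by omega)) h1
    have hτ₀ : ∀ u ∈ τ₀.support, u ∉ ((R.initSeg b₀ : Finset V) : Set V) :=
      fun u hu hmem => (hsupR₀ u hu) (Ray.initSeg_subset_range hmem)
    have hv₀n : v₀ ∉ ((R.initSeg b₀ : Finset V) : Set V) :=
      ComponentCompl.notMem_of_mem hv₀E
    have hxn : x ∉ ((R.initSeg b₀ : Finset V) : Set V) :=
      fun hmem => hxR (Ray.initSeg_subset_range hmem)
    have hsame := aux_walk_same_comp τ₀ hτ₀ hv₀n hxn
    obtain ⟨hv₀', ev⟩ := hv₀E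
    obtain ⟨hx', ex⟩ := hxC
    exact hE₀ne (by rw [← ev, hsame, ex])

lemma directional_to_topological {R : Ray G} (hdir : Directional R) : Topological R := by
  intro U hU
  have hgen : TopologicalSpace.GenerateOpen
      {U : Set (Ends G) | ∃ (X : Finset V) (C : G.ComponentCompl (X : Set V)),
        U = basicSet G X C} U := hU
  clear hU
  induction hgen with
  | @basic U hUS =>
    intro hmem
    obtain ⟨X, C, rfl⟩ := hUS
    have hCeq : C = R.tailComp X := livesIn_self_iff.mp hmem
    obtain ⟨n, hn⟩ := core_lemma hdir X
    refine ⟨n, R.tailComp (R.initSeg n), livesIn_self_iff.mpr rfl, ?_⟩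
    intro η hη
    show LivesIn η X C
    rw [hCeq]
    exact hn η hη
  | univ =>
    intro _
    exact ⟨0, R.tailComp (R.initSeg 0), livesIn_self_iff.mpr rfl, Set.subset_univ _⟩
  | @inter U₁ U₂ h1 h2 ih1 ih2 =>
    intro hmem
    obtain ⟨n₁, C₁, hC₁, hs₁⟩ := ih1 hmem.1
    obtain ⟨n₂, C₂, hC₂, hs₂⟩ := ih2 hmem.2
    have hC₁e : C₁ = R.tailComp (R.initSeg n₁) := livesIn_self_iff.mp hC₁
    have hC₂e : C₂ = R.tailComp (R.initSeg n₂) := livesIn_self_iff.mp hC₂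
    refine ⟨max n₁ n₂, R.tailComp (R.initSeg (max n₁ n₂)), livesIn_self_iff.mpr rfl, ?_⟩
    intro η hη
    constructor
    · apply hs₁
      show LivesIn η (R.initSeg n₁) C₁
      rw [hC₁e]
      exact livesIn_initSeg_mono R (le_max_left _ _) hη
    · apply hs₂
      show LivesIn η (R.initSeg n₂) C₂
      rw [hC₂e]
      exact livesIn_initSeg_mono R (le_max_right _ _) hη
  | @sUnion S hS ihS =>
    intro hmem
    obtain ⟨t, ht, hmemt⟩ := hmem
    obtain ⟨n, C, hC, hsub⟩ := ihS t ht hmemt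
    exact ⟨n, C, hC, hsub.trans (Set.subset_sUnion_of_mem ht)⟩

end Forward

/-- A ray is directional in `G` if and only if it is topological in `G`. -/
theorem stmt_2 {V : Type u} (G : SimpleGraph V) (R : Ray G) :
    Directional R ↔ Topological R :=
  ⟨directional_to_topological, topological_to_directional⟩
end

section
/- Every direction of a graph G that is countably determined in G is induced by a ray of G all of whose finite initial segments X yield directional choices (X, f(X)) that together distinguish f from every other direction of G. -/
/-! Common definitions: rays, ends (à la Halin), the end space, directions
(via Mathlib's `SimpleGraph.end`), domination, generalised paths, etc. -/

open Classical SimpleGraph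

universe u

variable {V : Type u}

/-! ### Auxiliary development for `stmt_4` -/

section Stmt4Aux

open CategoryTheory

variable {G : SimpleGraph V}

/-- Reachability in `G` avoiding the vertex set `K`. -/
inductive AR (G : SimpleGraph V) (K : Set V) : V → V → Prop
  | refl {x : V} (hx : x ∉ K) : AR G K x x
  | tail {x y z : V} (h : AR G K x y) (a : G.Adj y z) (hz : z ∉ K) : AR G K x z

namespace AR

lemma not_mem_left {K : Set V} {x y : V} (h : AR G K x y) : x ∉ K := by
  induction h with
  | refl hx => exact hx
  | tail _ _ _ ih => exact ih

lemma not_mem_right {K : Set V} {x y : V} (h : AR G K x y) : y ∉ K := by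
  cases h with
  | refl hx => exact hx
  | tail _ _ hz => exact hz

lemma head {K : Set V} {x y z : V} (a : G.Adj x y) (hx : x ∉ K) (h : AR G K y z) :
    AR G K x z := by
  induction h with
  | refl hy => exact (AR.refl hx).tail a hy
  | tail h' a' hz ih => exact ih.tail a' hz

lemma trans {K : Set V} {x y z : V} (h : AR G K x y) (h' : AR G K y z) : AR G K x z := by
  induction h' with
  | refl _ => exact h
  | tail h'' a hz ih => exact ih.tail a hz

end AR

/-- Walks in the induced graph give `AR`. -/
lemma walk_AR {K : Set V} {a b : {x // x ∈ Kᶜ}} (w : (G.induce Kᶜ).Walk a b) :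
    AR G K a.1 b.1 := by
  induction w with
  | @nil u => exact AR.refl u.2
  | @cons u v w h p ih => exact AR.head h u.2 ih

lemma AR_reachable {K : Set V} {x y : V} (h : AR G K x y) :
    (G.induce Kᶜ).Reachable ⟨x, h.not_mem_left⟩ ⟨y, h.not_mem_right⟩ := by
  induction h with
  | refl hx => rfl
  | @tail y z h a hz ih =>
      exact ih.trans (SimpleGraph.Adj.reachable (by exact a))

/-- bridge2 -/
lemma mem_of_AR {K : Set V} {C : G.ComponentCompl K} {x y : V} (hx : x ∈ C)
    (h : AR G K x y) : y ∈ C := by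
  induction h with
  | refl _ => exact hx
  | @tail y z h a hz ih => exact ComponentCompl.mem_of_adj _ _ ih hz a

/-- bridge1 -/
lemma AR_of_mem {K : Set V} {C : G.ComponentCompl K} {x y : V} (hx : x ∈ C) (hy : y ∈ C) :
    AR G K x y := by
  obtain ⟨hx', ex⟩ := hx
  obtain ⟨hy', ey⟩ := hy
  have : G.componentComplMk hx' = G.componentComplMk hy' := ex.trans ey.symm
  rw [SimpleGraph.ConnectedComponent.eq] at this
  exact this.elim fun w => walk_AR w

lemma mem_unique {K : Set V} {C D : G.ComponentCompl K} {x : V} (hx : x ∈ C) (hx' : x ∈ D) :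
    C = D := by
  obtain ⟨h1, e1⟩ := hx
  obtain ⟨h2, e2⟩ := hx'
  exact e1.symm.trans e2

lemma AR.transfer {K K' : Set V} {C : G.ComponentCompl K} {x y : V}
    (h : AR G K x y) (hx : x ∈ C) (hd : ∀ v, v ∈ C → v ∉ K') : AR G K' x y := by
  induction h with
  | refl _ => exact AR.refl (hd _ hx)
  | @tail y z h a hz ih =>
      have hyC : y ∈ C := mem_of_AR hx h
      have hzC : z ∈ C := ComponentCompl.mem_of_adj _ _ hyC hz a
      exact ih.tail a (hd _ hzC)

lemma AR.crossing {K : Set V} {x y : V} (h : AR G K x y) (P : V → Prop)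
    (hx : ¬ P x) (hy : P y) :
    ∃ a b, G.Adj a b ∧ ¬ P a ∧ P b ∧ b ∉ K ∧ AR G K x a := by
  induction h with
  | refl _ => exact absurd hy hx
  | @tail y z h a hz ih =>
      by_cases hPy : P y
      · exact ih hPy
      · exact ⟨y, z, a, hPy, hy, hz, h⟩

section EndLemmas

variable (f : G.end)

lemma dirComp_mono {X Y : Finset V} (h : X ⊆ Y) :
    (dirComp f Y : Set V) ⊆ (dirComp f X : Set V) := by
  have h2 := f.2 ((homOfLE h).op)
  simp only [componentComplFunctor_map] at h2
  have := ComponentCompl.subset_hom (dirComp f Y) (by exact_mod_cast Finset.coe_subset.mpr h)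
  rw [show ComponentCompl.hom (Finset.coe_subset.mpr h) (dirComp f Y) = dirComp f X from h2] at this
  exact this

lemma not_mem_finset_of_mem {X : Finset V} {v : V} (h : v ∈ (dirComp f X : Set V)) : v ∉ X :=
  fun hv => ComponentCompl.notMem_of_mem h (by exact_mod_cast hv)

/-- Lemma B : if `u` lies in the component `f(X)` then `u` has a neighbour in
`f(insert u X)`. -/
lemma lemB {X : Finset V} {u : V} (hu : u ∈ (dirComp f X : Set V)) :
    ∃ w, G.Adj u w ∧ w ∈ (dirComp f (insert u X) : Set V) := by
  set Y : Finset V := insert u X with hY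
  have hXY : X ⊆ Y := Finset.subset_insert _ _
  obtain ⟨z, hz⟩ := (dirComp f Y).nonempty
  have hzX : z ∈ (dirComp f X : Set V) := dirComp_mono f hXY hz
  have har : AR G (X : Set V) z u := AR_of_mem hzX hu
  have huY : u ∉ (dirComp f Y : Set V) := fun h =>
    (not_mem_finset_of_mem f h) (Finset.mem_insert_self u X)
  obtain ⟨s, t, hst, hs, ht, htX, harzs⟩ :=
    har.crossing (fun v => v ∉ (dirComp f Y : Set V)) (by simpa using hz) huY
  -- `hs : ¬ s ∉ C_Y`, i.e. `s ∈ C_Y`; `ht : t ∉ C_Y`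
  rw [not_not] at hs
  have htu : t = u := by
    by_contra hne
    have htY' : t ∉ (Y : Set V) := by
      simp only [hY, Finset.coe_insert, Set.mem_insert_iff, Finset.mem_coe]
      push_neg
      exact ⟨hne, htX⟩
    exact ht (ComponentCompl.mem_of_adj s t hs htY' hst)
  subst htu
  exact ⟨s, hst.symm, hs⟩

end EndLemmas

lemma exists_pathList {K : Set V} {C : G.ComponentCompl K} {w u : V}
    (hw : w ∈ C) (hu : u ∈ C) :
    ∃ q : List V, q ≠ [] ∧ q.head? = some w ∧ q.getLast? = some u ∧ q.Nodup ∧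
      q.Chain' G.Adj ∧ ∀ x ∈ q, x ∈ (C : Set V) := by
  classical
  obtain ⟨hw', ew⟩ := hw
  obtain ⟨hu', eu⟩ := hu
  have hcc : G.componentComplMk hw' = G.componentComplMk hu' := ew.trans eu.symm
  rw [SimpleGraph.ConnectedComponent.eq] at hcc
  obtain ⟨p0⟩ := hcc
  set p := p0.bypass with hpdef
  have hp : p.IsPath := p0.bypass_isPath
  have hne : p.support ≠ [] := p.support_ne_nil
  refine ⟨p.support.map Subtype.val, ?_, ?_, ?_, ?_, ?_, ?_⟩
  · exact fun h => hne (List.map_eq_nil_iff.mp h)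
  · rw [List.head?_map, List.head?_eq_head hne, p.head_support]
    rfl
  · rw [List.getLast?_map, List.getLast?_eq_getLast hne, p.getLast_support]
    rfl
  · exact hp.support_nodup.map Subtype.val_injective
  · exact List.isChain_map_of_isChain Subtype.val (fun a b hab => hab) p.isChain_adj_support
  · intro x hx
    obtain ⟨y, hy, rfl⟩ := List.mem_map.mp hx
    have hreach : (G.induce Kᶜ).Reachable ⟨w, hw'⟩ y := ⟨p.takeUntil y hy⟩
    exact ⟨y.2, by rw [← ew]; exact (SimpleGraph.ConnectedComponent.eq.mpr hreach.symm)⟩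

/-- Finite paths with the invariant that the last vertex has a neighbour in the
component of the direction `f` beyond the path. -/
structure PD (G : SimpleGraph V) (f : G.end) where
  l : List V
  ne : l ≠ []
  nd : l.Nodup
  ch : l.Chain' G.Adj
  inv : ∃ x w, l.getLast? = some x ∧ G.Adj x w ∧ w ∈ (dirComp f l.toFinset : Set V)

section PDLemmas

variable {f : G.end}

/-- `a` is resolved by the path `P`. -/
def resolved (f : G.end) (a : V) (P : PD G f) : Prop :=
  a ∈ P.l.toFinset ∨ a ∉ (dirComp f P.l.toFinset : Set V)

lemma resolved_mono {a : V} {P P' : PD G f} (h : P.l <+: P'.l) (hr : resolved f a P) :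
    resolved f a P' := by
  have hsub : P.l.toFinset ⊆ P'.l.toFinset := fun x hx =>
    List.mem_toFinset.mpr (h.subset (List.mem_toFinset.mp hx))
  rcases hr with h1 | h2
  · exact Or.inl (hsub h1)
  · exact Or.inr fun hc => h2 (dirComp_mono f hsub hc)

lemma ext_props (P : PD G f) {q : List V} {w : V} (hqh : q.head? = some w)
    (hnd : q.Nodup) (hch : q.Chain' G.Adj)
    (hmem : ∀ x ∈ q, x ∈ (dirComp f P.l.toFinset : Set V))
    {x : V} (hx : P.l.getLast? = some x) (hadj : G.Adj x w) :
    (P.l ++ q) ≠ [] ∧ (P.l ++ q).Nodup ∧ (P.l ++ q).Chain' G.Adj := by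
  refine ⟨List.append_ne_nil_of_left_ne_nil P.ne _, ?_, ?_⟩
  · rw [List.nodup_append]
    exact ⟨P.nd, hnd, fun a hal b haq hab =>
      not_mem_finset_of_mem f (hmem b haq) (List.mem_toFinset.mpr (hab ▸ hal))⟩
  · rw [show (P.l ++ q).Chain' G.Adj ↔ List.IsChain G.Adj (P.l ++ q) from Iff.rfl,
      List.isChain_append]
    refine ⟨P.ch, hch, fun y hy z hz => ?_⟩
    rw [hx, Option.mem_def, Option.some_inj] at hy
    rw [hqh, Option.mem_def, Option.some_inj] at hz
    rw [← hy, ← hz] at *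
    exact hadj

/-- touch-base step: extend `P` by one vertex lying in the current component. -/
lemma tb (P : PD G f) : ∃ (P' : PD G f) (w : V),
    P'.l = P.l ++ [w] ∧ w ∈ (dirComp f P.l.toFinset : Set V) := by
  obtain ⟨x, w, hlast, hadj, hw⟩ := P.inv
  have hq : ∀ y ∈ [w], y ∈ (dirComp f P.l.toFinset : Set V) := by
    intro y hy; rw [List.mem_singleton] at hy; rwa [hy]
  obtain ⟨hne', hnd', hch'⟩ := ext_props P (q := [w]) rfl (List.nodup_singleton w)
    (List.isChain_singleton w) hq hlast hadj
  have htf : (P.l ++ [w]).toFinset = insert w P.l.toFinset := by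
    rw [List.toFinset_append, List.toFinset_cons, List.toFinset_nil,
      insert_empty_eq, Finset.union_comm]
    rfl
  obtain ⟨w', hadj', hw'⟩ := lemB f hw
  refine ⟨⟨P.l ++ [w], hne', hnd', hch', ⟨w, w', ?_, hadj', ?_⟩⟩, w, rfl, hw⟩
  · rw [List.getLast?_append_of_ne_nil _ (List.cons_ne_nil w [])]
    rfl
  · rw [htf]; exact hw'

end PDLemmas

lemma toFinset_concat (l : List V) (e : V) :
    (l ++ [e]).toFinset = insert e l.toFinset := by
  rw [List.toFinset_append, List.toFinset_cons, List.toFinset_nil,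
    insert_empty_eq, Finset.union_comm]
  rfl

section RoundLemma

variable {f : G.end}

/-- The round lemma : any single vertex can be resolved by a suitable extension. -/
lemma roundPD (P : PD G f) (t : V) :
    ∃ P' : PD G f, P.l <+: P'.l ∧ resolved f t P' := by
  by_cases h0 : resolved f t P
  · exact ⟨P, List.prefix_refl _, h0⟩
  rw [resolved, not_or, not_not] at h0
  obtain ⟨htI, htC⟩ := h0
  obtain ⟨x, w, hlast, hadj, hw⟩ := P.inv
  -- a path `q` from `w` to `t` inside the component of `f` beyond `P`
  obtain ⟨q, hqne, hqh, hqlast, hqnd, hqch, hqmem⟩ := exists_pathList hw htC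
  -- split off the last vertex : `q = qi ++ [t]`
  have hq_split : q.dropLast ++ [t] = q := by
    have h1 := List.dropLast_append_getLast hqne
    have h2 : q.getLast hqne = t := by
      have := List.getLast?_eq_getLast hqne
      rw [hqlast] at this
      exact (Option.some_inj.mp this).symm
    rwa [h2] at h1
  set qi := q.dropLast with hqi
  by_cases hcaseA : t ∈ (dirComp f (P.l ++ qi).toFinset : Set V)
  · -- Visit : append the whole of `q`, ending at `t`.
    obtain ⟨hne', hnd', hch'⟩ := ext_props P hqh hqnd hqch hqmem hlast hadj
    obtain ⟨w', hadj', hw'⟩ := lemB f hcaseA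
    have htf : (P.l ++ q).toFinset = insert t (P.l ++ qi).toFinset := by
      rw [← hq_split, ← List.append_assoc, toFinset_concat]
    have htq : t ∈ q := by
      rw [← hq_split]
      exact List.mem_append_right _ (List.mem_singleton_self t)
    refine ⟨⟨P.l ++ q, hne', hnd', hch', ⟨t, w', ?_, hadj', ?_⟩⟩, List.prefix_append _ _, ?_⟩
    · rw [List.getLast?_append_of_ne_nil _ hqne]; exact hqlast
    · rw [htf]; exact hw'
    · exact Or.inl (List.mem_toFinset.mpr (List.mem_append_right _ htq))
  -- Case B : descent.
  have hqine : qi ≠ [] := by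
    intro hnil
    rw [hnil] at hq_split
    apply hcaseA
    rw [hnil, List.append_nil]
    have : w = t := by
      rw [← hq_split] at hqh
      exact Option.some_inj.mp (by simpa using hqh.symm)
    rwa [← this]
  obtain ⟨w', tl, hqi_cons⟩ := List.exists_cons_of_ne_nil hqine
  have hww : w' = w := by
    have hh : qi.head? = some w := by
      have := hqh
      rw [← hq_split, List.head?_append_of_ne_nil _ hqine] at this
      exact this
    rw [hqi_cons] at hh
    exact Option.some_inj.mp hh
  rw [hww] at hqi_cons
  clear hww
  -- the prefix lists
  set L : ℕ → List V := fun k => P.l ++ w :: tl.take k with hL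
  have hLsucc : ∀ (k : ℕ) (hk : k < tl.length), L (k + 1) = L k ++ [tl.get ⟨k, hk⟩] := by
    intro k hk
    simp only [hL]
    rw [List.take_succ]
    have : tl[k]? = some (tl.get ⟨k, hk⟩) := by
      rw [List.getElem?_eq_getElem hk]; rfl
    rw [this]
    simp
  have hqpre : ∀ k, (w :: tl.take k) <+: q := by
    intro k
    refine List.IsPrefix.trans ?_ ⟨[t], hq_split⟩
    rw [hqi_cons]
    exact ⟨tl.drop k, by simp⟩
  have hLprops : ∀ k, (L k) ≠ [] ∧ (L k).Nodup ∧ (L k).Chain' G.Adj := by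
    intro k
    refine ext_props P rfl ?_ ?_ ?_ hlast hadj
    · exact hqnd.sublist (hqpre k).sublist
    · exact hqch.prefix (hqpre k)
    · exact fun y hy => hqmem y ((hqpre k).subset hy)
  have hPpre : ∀ k, P.l <+: L k := fun k => List.prefix_append _ _
  have hLlast0 : (L 0).getLast? = some w := by
    simp only [hL, List.take_zero]
    rw [List.getLast?_append_of_ne_nil _ (List.cons_ne_nil w [])]
    rfl
  have hLlast : ∀ (k : ℕ) (hk : k < tl.length),
      (L (k + 1)).getLast? = some (tl.get ⟨k, hk⟩) := by
    intro k hk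
    rw [hLsucc k hk, List.getLast?_append_of_ne_nil _ (List.cons_ne_nil _ [])]
    rfl
  have hWsucc : ∀ (k : ℕ) (hk : k < tl.length),
      (L (k + 1)).toFinset = insert (tl.get ⟨k, hk⟩) (L k).toFinset := by
    intro k hk
    rw [hLsucc k hk, toFinset_concat]
  have hL0fin : (L 0).toFinset = insert w P.l.toFinset := by
    have : L 0 = P.l ++ [w] := by simp [hL]
    rw [this, toFinset_concat]
  -- the descent
  have desc : ∀ k, k ≤ tl.length → t ∉ (dirComp f (L k).toFinset : Set V) →
      ∃ P' : PD G f, P.l <+: P'.l ∧ resolved f t P' := by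
    intro k
    induction k using Nat.strong_induction_on with
    | _ k ih =>
      intro hk htk
      by_cases hE : ∃ y w', (L k).getLast? = some y ∧ G.Adj y w' ∧
          w' ∈ (dirComp f (L k).toFinset : Set V)
      · obtain ⟨hne', hnd', hch'⟩ := hLprops k
        exact ⟨⟨L k, hne', hnd', hch', hE⟩, hPpre k, Or.inr htk⟩
      cases k with
      | zero =>
        exfalso
        apply hE
        obtain ⟨w', ha', hw'⟩ := lemB f hw
        exact ⟨w, w', hLlast0, ha', by rw [hL0fin]; exact hw'⟩
      | succ m =>
        have hm : m < tl.length := by omega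
        set e := tl.get ⟨m, hm⟩ with he
        have step1 : e ∉ (dirComp f (L m).toFinset : Set V) := by
          intro hmem1
          apply hE
          obtain ⟨w', ha', hw'⟩ := lemB f hmem1
          exact ⟨e, w', hLlast m hm, ha', by rw [hWsucc m hm]; exact hw'⟩
        have step2 : t ∉ (dirComp f (L m).toFinset : Set V) := by
          intro htm
          obtain ⟨xx, hxx⟩ := (dirComp f (L (m+1)).toFinset).nonempty
          have hsub : (L m).toFinset ⊆ (L (m+1)).toFinset := by
            rw [hWsucc m hm]; exact Finset.subset_insert _ _
          have hxm : xx ∈ (dirComp f (L m).toFinset : Set V) := dirComp_mono f hsub hxx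
          have har := AR_of_mem htm hxm
          obtain ⟨s, b, hsb, hPs, hPb, hbK, harts⟩ :=
            har.crossing (fun v => v ∈ (dirComp f (L (m+1)).toFinset : Set V)) htk hxx
          have hsm : s ∈ (dirComp f (L m).toFinset : Set V) := mem_of_AR htm harts
          have hsW : s ∈ (L (m+1)).toFinset := by
            by_contra hsnot
            exact hPs (ComponentCompl.mem_of_adj b s hPb
              (fun hc => hsnot (by exact_mod_cast hc)) hsb.symm)
          have hse : s = e := by
            rw [hWsucc m hm, Finset.mem_insert] at hsW
            rcases hsW with h | h
            · exact h
            · exact absurd h (fun hc => (not_mem_finset_of_mem f hsm) hc)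
          exact step1 (hse ▸ hsm)
        exact ih m (by omega) (by omega) step2
  have hfull : L tl.length = P.l ++ qi := by
    simp [hL, hqi_cons]
  refine desc tl.length le_rfl ?_
  rw [hfull]
  exact hcaseA

end RoundLemma

section Stage

variable {f : G.end}

lemma stagePD (P : PD G f) (A : Finset V) :
    ∃ P' : PD G f, P.l <+: P'.l ∧ ∀ a ∈ A, resolved f a P' := by
  classical
  induction A using Finset.induction_on with
  | empty => exact ⟨P, List.prefix_refl _, by simp⟩
  | @insert a A ha ih =>
    obtain ⟨P1, h1, hres⟩ := ih
    obtain ⟨P2, h2, hres2⟩ := roundPD P1 a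
    refine ⟨P2, h1.trans h2, fun b hb => ?_⟩
    rcases Finset.mem_insert.mp hb with rfl | hbA
    · exact hres2
    · exact resolved_mono h2 (hres b hbA)

lemma bigstep (P : PD G f) (A : Finset V) :
    ∃ (P' : PD G f) (w : V), (P.l ++ [w]) <+: P'.l ∧
      w ∈ (dirComp f P.l.toFinset : Set V) ∧ ∀ a ∈ A, resolved f a P' := by
  obtain ⟨P1, w, hP1, hwmem⟩ := tb P
  obtain ⟨P2, hpre, hres⟩ := stagePD P1 A
  exact ⟨P2, w, by rw [← hP1]; exact hpre, hwmem, hres⟩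

lemma exists_P0 (f : G.end) : Nonempty (PD G f) := by
  obtain ⟨v0, hv0⟩ := (dirComp f (∅ : Finset V)).nonempty
  obtain ⟨w, hadj, hw⟩ := lemB f hv0
  refine ⟨⟨[v0], List.cons_ne_nil _ _, List.nodup_singleton _, List.isChain_singleton _,
    ⟨v0, w, rfl, hadj, ?_⟩⟩⟩
  have : ([v0] : List V).toFinset = insert v0 (∅ : Finset V) := by simp
  rw [this]
  exact hw

end Stage

section Construction

variable (f : G.end) (A : ℕ → Finset V)

noncomputable def seqPD : ℕ → PD G f
  | 0 => (exists_P0 f).some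
  | n + 1 => (bigstep (seqPD n) (A n)).choose

lemma seq_spec (n : ℕ) : ∃ w : V,
    ((seqPD f A n).l ++ [w]) <+: (seqPD f A (n+1)).l ∧
    w ∈ (dirComp f (seqPD f A n).l.toFinset : Set V) ∧
    ∀ a ∈ A n, resolved f a (seqPD f A (n+1)) :=
  (bigstep (seqPD f A n) (A n)).choose_spec

lemma seq_pre (n : ℕ) : (seqPD f A n).l <+: (seqPD f A (n+1)).l := by
  obtain ⟨w, h, -, -⟩ := seq_spec f A n
  exact (List.prefix_append _ _).trans h

lemma seq_preLE {m n : ℕ} (h : m ≤ n) : (seqPD f A m).l <+: (seqPD f A n).l := by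
  induction n with
  | zero => rw [Nat.le_zero.mp h]
  | succ n ih =>
    rcases Nat.lt_or_ge m (n+1) with h' | h'
    · exact (ih (by omega)).trans (seq_pre f A n)
    · rw [Nat.le_antisymm h h']

lemma seq_len (n : ℕ) : n < (seqPD f A n).l.length := by
  induction n with
  | zero => exact List.length_pos_iff.mpr (seqPD f A 0).ne
  | succ n ih =>
    obtain ⟨w, h, -, -⟩ := seq_spec f A n
    have := h.length_le
    simp only [List.length_append, List.length_singleton] at this
    omega

noncomputable def theRay : Ray G where
  f := fun n => (seqPD f A n).l.get ⟨n, seq_len f A n⟩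
  inj := by
    have key : ∀ m n : ℕ, m ≤ n →
        (seqPD f A m).l.get ⟨m, seq_len f A m⟩ = (seqPD f A n).l.get ⟨n, seq_len f A n⟩ →
        m = n := by
      intro m n hmn he
      have hp := seq_preLE f A hmn
      have h1 : (seqPD f A n).l[m]'(lt_of_lt_of_le (seq_len f A m) hp.length_le) =
          (seqPD f A m).l[m]'(seq_len f A m) := (hp.getElem _).symm
      rw [List.get_eq_getElem, List.get_eq_getElem, ← h1] at he
      exact ((seqPD f A n).nd.getElem_inj_iff.mp he)
    intro m n he
    rcases Nat.le_total m n with h | h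
    · exact key m n h he
    · exact (key n m h he.symm).symm
  adj := by
    intro n
    have hlen : n + 1 < (seqPD f A (n+1)).l.length := seq_len f A (n+1)
    have hp := seq_preLE f A (Nat.le_succ n)
    have h1 : (seqPD f A (n+1)).l[n]'(by omega) = (seqPD f A n).l[n]'(seq_len f A n) :=
      (hp.getElem _).symm
    have hch := List.isChain_iff_getElem.mp (seqPD f A (n+1)).ch n (by omega)
    simp only [List.get_eq_getElem] at hch ⊢
    rw [← h1]
    exact hch

lemma rayf_eq (k i : ℕ) (h : i < (seqPD f A k).l.length) :
    (seqPD f A k).l[i]'h = (theRay f A).f i := by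
  show _ = (seqPD f A i).l.get ⟨i, seq_len f A i⟩
  rcases Nat.le_total i k with h' | h'
  · have hp := seq_preLE f A h'
    rw [List.get_eq_getElem]
    exact (hp.getElem _).symm
  · have hp := seq_preLE f A h'
    rw [List.get_eq_getElem]
    exact hp.getElem h

lemma initSeg_eq (k : ℕ) :
    (theRay f A).initSeg ((seqPD f A k).l.length) = (seqPD f A k).l.toFinset := by
  ext x
  simp only [Ray.initSeg, Finset.mem_image, List.mem_toFinset]
  constructor
  · rintro ⟨i, hi, rfl⟩
    rw [Finset.mem_range] at hi
    rw [← rayf_eq f A k i hi]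
    exact List.getElem_mem _
  · intro hx
    obtain ⟨i, hi, he⟩ := List.mem_iff_getElem.mp hx
    exact ⟨i, Finset.mem_range.mpr hi, by rw [← rayf_eq f A k i hi, he]⟩

end Construction


lemma AR.symm {K : Set V} {x y : V} (h : AR G K x y) : AR G K y x := by
  induction h with
  | refl hx => exact AR.refl hx
  | @tail y z h a hz ih => exact AR.head a.symm hz ih

lemma L1core (f d : G.end) (Y Z : Finset V) (hYd : dirComp d Y = dirComp f Y)
    (hdisj : ∀ a ∈ Z, a ∉ (dirComp f Y : Set V)) : dirComp d Z = dirComp f Z := by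
  obtain ⟨xx, hx⟩ := (dirComp d (Y ∪ Z)).nonempty
  obtain ⟨yy, hy⟩ := (dirComp f (Y ∪ Z)).nonempty
  have hxY : xx ∈ (dirComp f Y : Set V) := by
    rw [← hYd]; exact dirComp_mono d Finset.subset_union_left hx
  have hyY : yy ∈ (dirComp f Y : Set V) := dirComp_mono f Finset.subset_union_left hy
  have hxZ : xx ∈ (dirComp d Z : Set V) := dirComp_mono d Finset.subset_union_right hx
  have hyZ : yy ∈ (dirComp f Z : Set V) := dirComp_mono f Finset.subset_union_right hy
  have har : AR G (Y : Set V) xx yy := AR_of_mem hxY hyY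
  have har2 : AR G (Z : Set V) xx yy :=
    har.transfer hxY (fun v hv hvZ => hdisj v (by exact_mod_cast hvZ) hv)
  exact mem_unique (mem_of_AR hxZ har2) hyZ

section Construction2

variable (f : G.end) (A : ℕ → Finset V)

lemma ray_AR {S : Set V} {N : ℕ} (hS : ∀ k, N ≤ k → (theRay f A).f k ∉ S) :
    ∀ i j, N ≤ i → i ≤ j → AR G S ((theRay f A).f i) ((theRay f A).f j) := by
  intro i j hNi hij
  induction j, hij using Nat.le_induction with
  | base => exact AR.refl (hS i hNi)
  | succ j hij ih => exact ih.tail ((theRay f A).adj j) (hS (j+1) (by omega))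

lemma initSeg_avoid (m : ℕ) :
    ∀ k, m ≤ k → (theRay f A).f k ∉ (((theRay f A).initSeg m : Finset V) : Set V) := by
  intro k hk hmem
  simp only [Ray.initSeg, Finset.coe_image, Set.mem_image, Finset.mem_coe,
    Finset.mem_range] at hmem
  obtain ⟨i, hi, he⟩ := hmem
  have := (theRay f A).inj he
  omega

lemma tb_pos (k : ℕ) :
    (theRay f A).f ((seqPD f A k).l.length) ∈
      (dirComp f ((theRay f A).initSeg ((seqPD f A k).l.length)) : Set V) := by
  obtain ⟨w, hpre, hwmem, -⟩ := seq_spec f A k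
  set p := (seqPD f A k).l.length with hp
  have hval : (theRay f A).f p = w := by
    have hlt : p < ((seqPD f A k).l ++ [w]).length := by simp [hp]
    have h1 : ((seqPD f A k).l ++ [w])[p]'hlt = w :=
      List.getElem_concat_length rfl _
    have hlt2 : p < (seqPD f A (k+1)).l.length := lt_of_lt_of_le hlt hpre.length_le
    have h2 : ((seqPD f A k).l ++ [w])[p]'hlt = (seqPD f A (k+1)).l[p]'hlt2 :=
      hpre.getElem _
    rw [← rayf_eq f A (k+1) p hlt2, ← h2, h1]
  rw [initSeg_eq f A k, hval]
  exact hwmem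

lemma initSeg_mono {m n : ℕ} (h : m ≤ n) :
    (theRay f A).initSeg m ⊆ (theRay f A).initSeg n := by
  intro x hx
  simp only [Ray.initSeg, Finset.mem_image, Finset.mem_range] at hx ⊢
  obtain ⟨i, hi, he⟩ := hx
  exact ⟨i, by omega, he⟩

lemma T_final (m k : ℕ) (hmk : m ≤ k) :
    (theRay f A).f k ∈ (dirComp f ((theRay f A).initSeg m) : Set V) := by
  set p := (seqPD f A k).l.length with hp
  have hkp : k < p := seq_len f A k
  have h1 := tb_pos f A k
  have h2 : (theRay f A).f p ∈ (dirComp f ((theRay f A).initSeg m) : Set V) :=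
    dirComp_mono f (initSeg_mono f A (by omega)) h1
  have har := ray_AR f A (initSeg_avoid f A m) k p hmk (by omega)
  exact mem_of_AR h2 har.symm

lemma exists_bound (X : Finset V) :
    ∃ N, ∀ k, N ≤ k → (theRay f A).f k ∉ (X : Set V) := by
  have hfin : ((theRay f A).f ⁻¹' (X : Set V)).Finite :=
    Set.Finite.preimage ((theRay f A).inj.injOn) X.finite_toSet
  obtain ⟨N, hN⟩ := hfin.bddAbove
  refine ⟨N + 1, fun k hk hmem => ?_⟩
  have : k ≤ N := hN hmem
  omega

noncomputable def gN (X : Finset V) : ℕ := (exists_bound f A X).choose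

lemma gN_spec (X : Finset V) :
    ∀ k, gN f A X ≤ k → (theRay f A).f k ∉ (X : Set V) :=
  (exists_bound f A X).choose_spec

noncomputable def gC (X : Finset V) : G.ComponentCompl (X : Set V) :=
  G.componentComplMk (gN_spec f A X _ le_rfl)

lemma gC_mem (X : Finset V) (k : ℕ) (h : gN f A X ≤ k) :
    (theRay f A).f k ∈ (gC f A X : Set V) := by
  have har := ray_AR f A (gN_spec f A X) (gN f A X) k le_rfl h
  exact mem_of_AR (G.componentComplMk_mem _) har

noncomputable def gEnd : G.end := by
  refine ⟨fun K => gC f A K.unop, ?_⟩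
  intro i j φ
  have hle : (j.unop : Finset V) ⊆ i.unop := le_of_op_hom φ
  have hle2 : ((j.unop : Finset V) : Set V) ⊆ ((i.unop : Finset V) : Set V) := by
    exact_mod_cast Finset.coe_subset.mpr hle
  set M := max (gN f A i.unop) (gN f A j.unop) with hM
  have h1 : (theRay f A).f M ∈ ((gC f A i.unop).hom hle2 : Set V) :=
    ComponentCompl.subset_hom _ _ (gC_mem f A i.unop M (le_max_left _ _))
  have h2 : (theRay f A).f M ∈ (gC f A j.unop : Set V) :=
    gC_mem f A j.unop M (le_max_right _ _)
  exact mem_unique h1 h2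

lemma dirComp_gEnd (X : Finset V) : dirComp (gEnd f A) X = gC f A X := rfl

lemma g_initSeg_agree (n : ℕ) :
    dirComp (gEnd f A) ((theRay f A).initSeg n) = dirComp f ((theRay f A).initSeg n) := by
  set X := (theRay f A).initSeg n with hX
  set M := max n (gN f A X) with hM
  have h1 : (theRay f A).f M ∈ (dirComp (gEnd f A) X : Set V) := by
    rw [dirComp_gEnd]
    exact gC_mem f A X M (le_max_right _ _)
  have h2 : (theRay f A).f M ∈ (dirComp f X : Set V) :=
    T_final f A n M (le_max_left _ _)
  exact mem_unique h1 h2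

end Construction2

end Stmt4Aux

/-- Every countably determined direction `f` of `G` is induced by a ray all of
whose finite initial segments `X` yield directional choices `(X, f(X))` that
together distinguish `f` from every other direction of `G`. -/
theorem stmt_4 {V : Type u} (G : SimpleGraph V) (f : G.end)
    (hf : DirCountablyDetermined f) :
    ∃ R : Ray G, InducesDir R f ∧
      ∀ h : G.end, h ≠ f →
        ∃ n : ℕ, dirComp h (R.initSeg n) ≠ dirComp f (R.initSeg n) := by
  classical
  obtain ⟨D, hDc, hDdet⟩ := hf
  obtain ⟨A, hA⟩ : ∃ A : ℕ → Finset V, ∀ p ∈ D, ∃ k, A k = p.1 := by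
    rcases Set.eq_empty_or_nonempty ((fun p => p.1) '' D : Set (Finset V)) with he | hne
    · exact ⟨fun _ => ∅, fun p hp =>
        absurd (Set.mem_image_of_mem _ hp) (by rw [he]; exact Set.notMem_empty _)⟩
    · obtain ⟨g, hg⟩ := (hDc.image _).exists_eq_range hne
      refine ⟨g, fun p hp => ?_⟩
      have : p.1 ∈ Set.range g := by rw [← hg]; exact Set.mem_image_of_mem _ hp
      obtain ⟨k, hk⟩ := this
      exact ⟨k, hk⟩
  have hres : ∀ p ∈ D, ∃ n : ℕ,
      ∀ a ∈ p.1, a ∉ (dirComp f ((theRay f A).initSeg n) : Set V) := by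
    intro p hp
    obtain ⟨k, hk⟩ := hA p hp
    obtain ⟨w, -, -, hstage⟩ := seq_spec f A k
    refine ⟨(seqPD f A (k+1)).l.length, fun a ha => ?_⟩
    have hres1 : resolved f a (seqPD f A (k+1)) := hstage a (by rw [hk]; exact ha)
    rw [initSeg_eq f A (k+1)]
    rcases hres1 with h | h
    · exact fun hc => not_mem_finset_of_mem f hc h
    · exact h
  have agree_imp : ∀ d : G.end,
      (∀ n, dirComp d ((theRay f A).initSeg n) = dirComp f ((theRay f A).initSeg n)) →
      ∀ p ∈ D, dirComp d p.1 = dirComp f p.1 := by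
    intro d hd p hp
    obtain ⟨n, hn⟩ := hres p hp
    exact L1core f d ((theRay f A).initSeg n) p.1 (hd n) hn
  have hgf : gEnd f A = f := by
    by_contra hne
    obtain ⟨p, hp, hfp, hgp⟩ := hDdet (gEnd f A) hne
    exact hgp (by rw [agree_imp (gEnd f A) (g_initSeg_agree f A) p hp, hfp])
  refine ⟨theRay f A, ?_, ?_⟩
  · intro X
    refine ⟨gN f A X, fun n hn => ?_⟩
    have h1 : (theRay f A).f n ∈ (dirComp (gEnd f A) X : Set V) := by
      rw [dirComp_gEnd]
      exact gC_mem f A X n hn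
    rwa [hgf] at h1
  · intro h hhf
    by_contra hno
    push_neg at hno
    obtain ⟨p, hp, hfp, hhp⟩ := hDdet h hhf
    have : ∀ n, dirComp h ((theRay f A).initSeg n) = dirComp f ((theRay f A).initSeg n) :=
      fun n => by
        rcases hno n with he
        exact not_not.mp (by simpa using he)
    exact hhp (by rw [agree_imp h this p hp, hfp])
end

section
/- If G is a graph, ω an end of G, and G contains an uncountable collection of pairwise vertex-disjoint generalised paths (P^i, {ω, ω^i}) with the ω^i pairwise distinct ends different from ω, then ω has no countable neighbourhood base in the end space Ω(G). -/
/-! Common definitions: rays, ends (à la Halin), the end space, directions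
(via Mathlib's `SimpleGraph.end`), domination, generalised paths, etc. -/

open Classical SimpleGraph

universe u

variable {V : Type u}

section Aux

variable {V : Type u} {G : SimpleGraph V}

lemma mem_comp_unique {K : Set V} {C D : G.ComponentCompl K} {v : V}
    (hC : v ∈ (C : Set V)) (hD : v ∈ (D : Set V)) : C = D := by
  obtain ⟨h1, e1⟩ := hC
  obtain ⟨h2, e2⟩ := hD
  exact e1.symm.trans e2

lemma walk_mem_comp {K : Set V} {C : G.ComponentCompl K} :
    ∀ {u v : V} (W : G.Walk u v), (∀ w ∈ W.support, w ∉ K) → v ∈ (C : Set V) →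
      u ∈ (C : Set V) := by
  intro u v W
  induction W with
  | nil => exact fun _ hv => hv
  | cons a p ih =>
    rename_i x y z
    intro hW hv
    have hy : y ∈ (C : Set V) := ih (fun w hw => hW w (by simp [hw])) hv
    obtain ⟨hy', e⟩ := hy
    have hx : x ∉ K := hW x (by simp)
    exact ⟨hx, (G.componentComplMk_eq_of_adj hx hy' a).trans e⟩

lemma Ray.exists_avoid (R : Ray G) (X : Finset V) :
    ∃ N, ∀ n, N ≤ n → R.f n ∉ (X : Set V) := by
  have hfin : {n : ℕ | R.f n ∈ (X : Set V)}.Finite :=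
    Set.Finite.preimage R.inj.injOn X.finite_toSet
  obtain ⟨N, hN⟩ := hfin.bddAbove
  exact ⟨N + 1, fun n hn hmem => by
    have := hN hmem
    omega⟩

lemma Ray.mem_comp_from (R : Ray G) {K : Set V} {N : ℕ}
    (h : ∀ n, N ≤ n → R.f n ∉ K) :
    ∀ n, N ≤ n → R.f n ∈ (G.componentComplMk (h N le_rfl) : Set V) := by
  intro n hn
  induction n, hn using Nat.le_induction with
  | base => exact G.componentComplMk_mem _
  | succ n hn ih =>
    obtain ⟨h1, e⟩ := ih
    exact ⟨h (n+1) (by omega),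
      (G.componentComplMk_eq_of_adj (h (n+1) (by omega)) h1 (R.adj n).symm).trans e⟩

lemma Ray.exists_tailIn (R : Ray G) (X : Finset V) :
    ∃ C : G.ComponentCompl (X : Set V), R.TailIn C := by
  obtain ⟨N, hN⟩ := R.exists_avoid X
  exact ⟨_, N, R.mem_comp_from hN⟩

lemma Ray.tailIn_unique_s6 {R : Ray G} {K : Set V} {C D : G.ComponentCompl K}
    (hC : R.TailIn C) (hD : R.TailIn D) : C = D := by
  obtain ⟨N, hN⟩ := hC
  obtain ⟨M, hM⟩ := hD
  exact mem_comp_unique (hN (N + M) (by omega)) (hM (N + M) (by omega))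

lemma RayEquiv.refl (R : Ray G) : RayEquiv G R R := fun X => by
  obtain ⟨C, hC⟩ := R.exists_tailIn X
  exact ⟨C, hC, hC⟩

lemma RayEquiv.symm {R S : Ray G} (h : RayEquiv G R S) : RayEquiv G S R := fun X => by
  obtain ⟨C, h1, h2⟩ := h X
  exact ⟨C, h2, h1⟩

lemma RayEquiv.trans {R S T : Ray G} (h1 : RayEquiv G R S) (h2 : RayEquiv G S T) :
    RayEquiv G R T := fun X => by
  obtain ⟨C, hC1, hC2⟩ := h1 X
  obtain ⟨D, hD1, hD2⟩ := h2 X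
  exact ⟨C, hC1, (Ray.tailIn_unique_s6 hD1 hC2).symm ▸ hD2⟩

lemma end_rep (ω : Ends G) : ∃ R : Ray G, R ∈ ω.1 ∧ ω.1 = { S | RayEquiv G R S } := by
  obtain ⟨R, hR⟩ := ω.2
  exact ⟨R, by rw [hR]; exact RayEquiv.refl R, hR⟩

lemma mem_end_equiv {ω : Ends G} {R S : Ray G} (hR : R ∈ ω.1) (h : RayEquiv G R S) :
    S ∈ ω.1 := by
  obtain ⟨R₀, _, hrep⟩ := end_rep ω
  rw [hrep] at hR ⊢
  exact hR.trans h

lemma exists_livesIn (ω : Ends G) (X : Finset V) :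
    ∃ C : G.ComponentCompl (X : Set V), LivesIn ω X C := by
  obtain ⟨R, hR, hrep⟩ := end_rep ω
  obtain ⟨C, hC⟩ := R.exists_tailIn X
  refine ⟨C, fun S hS => ?_⟩
  rw [hrep] at hS
  obtain ⟨D, hD1, hD2⟩ := hS X
  exact (Ray.tailIn_unique_s6 hD1 hC) ▸ hD2

lemma livesIn_unique {ω : Ends G} {X : Finset V} {C D : G.ComponentCompl (X : Set V)}
    (hC : LivesIn ω X C) (hD : LivesIn ω X D) : C = D := by
  obtain ⟨R, hR, _⟩ := end_rep ω
  exact Ray.tailIn_unique_s6 (hC R hR) (hD R hR)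

lemma livesIn_of_mem {ω : Ends G} {R : Ray G} (hR : R ∈ ω.1) {X : Finset V}
    {C : G.ComponentCompl (X : Set V)} (h : R.TailIn C) : LivesIn ω X C := by
  obtain ⟨D, hD⟩ := exists_livesIn ω X
  rwa [Ray.tailIn_unique_s6 (hD R hR) h] at hD

end Aux
section Aux2

variable {V : Type u} {G : SimpleGraph V}

/-- The shift of a ray. -/
def Ray.shift (R : Ray G) (k : ℕ) : Ray G where
  f := fun n => R.f (n + k)
  inj := fun a b h => by
    have := R.inj h
    omega
  adj := fun n => by
    have := R.adj (n + k)
    simpa [Nat.add_right_comm] using this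

lemma Ray.shift_tailIn {R : Ray G} {S : Set V} (h : R.TailIn S) (k : ℕ) :
    (R.shift k).TailIn S := by
  obtain ⟨N, hN⟩ := h
  exact ⟨N, fun n hn => hN (n + k) (by omega)⟩

lemma rayEquiv_shift (R : Ray G) (k : ℕ) : RayEquiv G R (R.shift k) := fun X => by
  obtain ⟨C, hC⟩ := R.exists_tailIn X
  exact ⟨C, hC, Ray.shift_tailIn hC k⟩

lemma shift_mem_end {ω : Ends G} {R : Ray G} (hR : R ∈ ω.1) (k : ℕ) :
    R.shift k ∈ ω.1 :=
  mem_end_equiv hR (rayEquiv_shift R k)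

lemma mem_initSeg_iff {R : Ray G} {N n : ℕ} : R.f n ∈ R.initSeg N ↔ n < N := by
  constructor
  · intro h
    obtain ⟨m, hm, he⟩ := Finset.mem_image.mp h
    rw [R.inj he] at hm
    exact Finset.mem_range.mp hm
  · intro h
    exact Finset.mem_image.mpr ⟨n, Finset.mem_range.mpr h, rfl⟩

/-- Lemma A: a vertex dominating `ω`, outside `X`, lies in the component where `ω` lives. -/
lemma dominates_comp {u : V} {ω : Ends G} (hd : DominatesEnd G u ω)
    {X : Finset V} (hu : u ∉ (X : Set V)) {C : G.ComponentCompl (X : Set V)}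
    (hω : LivesIn ω X C) : u ∈ (C : Set V) := by
  obtain ⟨R₀, hR₀, _⟩ := end_rep ω
  -- choose a ray in ω avoiding u
  obtain ⟨S, hS, hSu⟩ : ∃ S : Ray G, S ∈ ω.1 ∧ ∀ n, S.f n ≠ u := by
    by_cases h : ∃ k, R₀.f k = u
    · obtain ⟨k, hk⟩ := h
      refine ⟨R₀.shift (k+1), shift_mem_end hR₀ (k+1), fun n hn => ?_⟩
      have : n + (k+1) = k := R₀.inj (hn.trans hk.symm)
      omega
    · exact ⟨R₀, hR₀, fun n hn => h ⟨n, hn⟩⟩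
  obtain ⟨N, hN⟩ := hω S hS
  set Y : Finset V := X ∪ S.initSeg N with hY
  have huY : u ∉ Y := by
    simp only [hY, Finset.mem_union]
    rintro (h | h)
    · exact hu h
    · obtain ⟨m, _, he⟩ := Finset.mem_image.mp h
      exact hSu m he
  obtain ⟨u', W, ⟨n, hn⟩, hW⟩ := hd S hS Y huY
  have hend : u' ∉ (Y : Set V) := hW u' W.end_mem_support
  have hnN : N ≤ n := by
    by_contra hlt
    apply hend
    subst hn
    simp only [hY, Finset.coe_union, Set.mem_union]
    exact Or.inr (by exact_mod_cast mem_initSeg_iff.mpr (by omega))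
  have hu'C : u' ∈ (C : Set V) := hn ▸ hN n hnN
  refine walk_mem_comp W (fun w hw => ?_) hu'C
  intro hwX
  exact hW w hw (by simp [hY, hwX])

/-- All vertices of a double ray avoiding `K` lie in one component. -/
lemma DoubleRay.mem_comp {D : DoubleRay G} {K : Set V} (h : ∀ m, D.f m ∉ K)
    {C : G.ComponentCompl K} {m₀ : ℤ} (h0 : D.f m₀ ∈ (C : Set V)) :
    ∀ m, D.f m ∈ (C : Set V) := by
  have step : ∀ a : ℤ, (D.f a ∈ (C : Set V)) ↔ (D.f (a+1) ∈ (C : Set V)) := by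
    intro a
    have e := G.componentComplMk_eq_of_adj (h a) (h (a+1)) (D.adj a)
    constructor
    · rintro ⟨_, e2⟩; exact ⟨h (a+1), e.symm.trans e2⟩
    · rintro ⟨_, e2⟩; exact ⟨h a, e.trans e2⟩
  have key : ∀ m : ℤ, D.f m ∈ (C : Set V) → ∀ k : ℤ, D.f k ∈ (C : Set V) := by
    intro m hm k
    induction k using Int.induction_on with
    | zero =>
      -- reduce: show D.f 0 ∈ C from D.f m ∈ C
      induction m using Int.induction_on with
      | zero => exact hm
      | succ i ih => exact ih ((step i).mpr hm)
      | pred i ih =>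
        refine ih ?_
        have e : (-(i:ℤ)-1)+1 = -(i:ℤ) := by ring
        have := (step (-(i:ℤ)-1)).mp hm
        rwa [e] at this
    | succ i ih => exact (step i).mp ih
    | pred i ih =>
      have e : (-(i:ℤ)-1)+1 = -(i:ℤ) := by ring
      exact (step (-(i:ℤ)-1)).mpr (by rwa [e])
  exact key m₀ h0

/-- All vertices of a ray avoiding `K` lie in one component. -/
lemma Ray.mem_comp_all {R : Ray G} {K : Set V} (h : ∀ n, R.f n ∉ K)
    {C : G.ComponentCompl K} {n₀ : ℕ} (h0 : R.f n₀ ∈ (C : Set V)) :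
    ∀ n, R.f n ∈ (C : Set V) := by
  have step : ∀ a : ℕ, (R.f a ∈ (C : Set V)) ↔ (R.f (a+1) ∈ (C : Set V)) := by
    intro a
    have e := G.componentComplMk_eq_of_adj (h a) (h (a+1)) (R.adj a)
    constructor
    · rintro ⟨_, e2⟩; exact ⟨h (a+1), e.symm.trans e2⟩
    · rintro ⟨_, e2⟩; exact ⟨h a, e.trans e2⟩
  have down : ∀ m, R.f m ∈ (C : Set V) → R.f 0 ∈ (C : Set V) := by
    intro m
    induction m with
    | zero => exact id
    | succ i ih => exact fun hm => ih ((step i).mpr hm)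
  have up : ∀ m, R.f m ∈ (C : Set V) := by
    intro m
    induction m with
    | zero => exact down n₀ h0
    | succ i ih => exact (step i).mp ih
  exact up

end Aux2
section Aux3

variable {V : Type u} {G : SimpleGraph V}

/-- Main lemma: a generalised path avoiding `X` forces its two endpoints to
live in the same component of `G - X`. -/
lemma genpath_transfer {P : Set V} {ω ω' : Ends G} (hP : IsGenPath G P ω ω')
    {X : Finset V} (hPX : ∀ v ∈ P, v ∉ (X : Set V))
    {C : G.ComponentCompl (X : Set V)} (hω : LivesIn ω X C) : LivesIn ω' X C := by
  rcases hP with ⟨D, hPD, hD⟩ | ⟨u, v, W, hWp, hPW, hdom⟩ | ⟨R, hPR, hR⟩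
  · subst hPD
    have hav : ∀ m, D.f m ∉ (X : Set V) := fun m => hPX _ ⟨m, rfl⟩
    have main : ∀ (S R' : Ray G), S ∈ ω.1 → R' ∈ ω'.1 →
        (∀ n : ℕ, ∃ m : ℤ, S.f n = D.f m) → (∀ n : ℕ, ∃ m : ℤ, R'.f n = D.f m) →
        LivesIn ω' X C := by
      intro S R' hS hR' hSD hRD
      obtain ⟨K, hK⟩ := hω S hS
      obtain ⟨m₀, hm₀⟩ := hSD K
      have hDC : ∀ m, D.f m ∈ (C : Set V) :=
        DoubleRay.mem_comp hav (hm₀ ▸ hK K le_rfl)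
      refine livesIn_of_mem hR' ⟨0, fun n _ => ?_⟩
      obtain ⟨m, hm⟩ := hRD n
      exact hm ▸ hDC m
    rcases hD with ⟨⟨S, hS, M, hM⟩, ⟨R', hR', N', hN'⟩⟩ | ⟨⟨R', hR', N', hN'⟩, ⟨S, hS, M, hM⟩⟩
    · exact main S R' hS hR' (fun n => ⟨M + n, hM n⟩) (fun n => ⟨N' - n, hN' n⟩)
    · exact main S R' hS hR' (fun n => ⟨M - n, hM n⟩) (fun n => ⟨N' + n, hN' n⟩)
  · have hWX : ∀ w ∈ W.support, w ∉ (X : Set V) := fun w hw => hPX w (hPW ▸ hw)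
    have huX : u ∉ (X : Set V) := hWX u W.start_mem_support
    have hvX : v ∉ (X : Set V) := hWX v W.end_mem_support
    obtain ⟨C', hC'⟩ := exists_livesIn ω' X
    rcases hdom with ⟨hu, hv⟩ | ⟨hu, hv⟩
    · have huC : u ∈ (C : Set V) := dominates_comp hu huX hω
      have hvC : v ∈ (C : Set V) := by
        refine walk_mem_comp W.reverse (fun w hw => hWX w ?_) huC
        simpa using hw
      have hvC' : v ∈ (C' : Set V) := dominates_comp hv hvX hC'
      rwa [mem_comp_unique hvC' hvC] at hC'
    · have hvC : v ∈ (C : Set V) := dominates_comp hv hvX hω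
      have huC : u ∈ (C : Set V) := walk_mem_comp W hWX hvC
      have huC' : u ∈ (C' : Set V) := dominates_comp hu huX hC'
      rwa [mem_comp_unique huC' huC] at hC'
  · subst hPR
    have hav : ∀ n, R.f n ∉ (X : Set V) := fun n => hPX _ ⟨n, rfl⟩
    rcases hR with ⟨hRω, hdom'⟩ | ⟨hRω', hdom'⟩
    · obtain ⟨N, hN⟩ := hω R hRω
      have h0C : R.f 0 ∈ (C : Set V) := Ray.mem_comp_all hav (hN N le_rfl) 0
      obtain ⟨C', hC'⟩ := exists_livesIn ω' X
      have h0C' : R.f 0 ∈ (C' : Set V) := dominates_comp hdom' (hav 0) hC'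
      rwa [mem_comp_unique h0C' h0C] at hC'
    · have h0C : R.f 0 ∈ (C : Set V) := dominates_comp hdom' (hav 0) hω
      exact livesIn_of_mem hRω' ⟨0, fun n _ => Ray.mem_comp_all hav h0C n⟩

/-- Distinct ends are separated by some finite set. -/
lemma exists_sep {ω ω' : Ends G} (h : ω ≠ ω') :
    ∃ (X : Finset V) (C : G.ComponentCompl (X : Set V)),
      LivesIn ω X C ∧ ¬ LivesIn ω' X C := by
  by_contra hc
  push_neg at hc
  apply h
  obtain ⟨R, hR, hrep⟩ := end_rep ω
  obtain ⟨R', hR', hrep'⟩ := end_rep ω'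
  have hequiv : RayEquiv G R R' := fun X => by
    obtain ⟨C, hC⟩ := exists_livesIn ω X
    exact ⟨C, hC R hR, (hc X C hC) R' hR'⟩
  apply Subtype.ext
  rw [hrep, hrep']
  ext S
  exact ⟨fun hs => hequiv.symm.trans hs, fun hs => hequiv.trans hs⟩

end Aux3

/-- If `G` contains an uncountable collection of pairwise vertex-disjoint
generalised paths `(Pⁱ, {ω, ωⁱ})` with the `ωⁱ` pairwise distinct ends
different from `ω`, then `ω` has no countable neighbourhood base in `Ω(G)`. -/
theorem stmt_6 {V : Type u} (G : SimpleGraph V) (ω : Ends G)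
    (I : Type u) [Uncountable I] (P : I → Set V) (leaf : I → Ends G)
    (hdisj : ∀ i j, i ≠ j → Disjoint (P i) (P j))
    (hinj : Function.Injective leaf) (hne : ∀ i, leaf i ≠ ω)
    (hpath : ∀ i, IsGenPath G (P i) ω (leaf i)) :
    ¬ (nhds ω).IsCountablyGenerated := by
  intro hcg
  haveI := hcg
  obtain ⟨s, hs⟩ := (nhds ω).exists_antitone_basis
  have hbasis := TopologicalSpace.isTopologicalBasis_of_subbasis
    (t := endsTopology G)
    (s := { U | ∃ (X : Finset V) (C : G.ComponentCompl (X : Set V)), U = basicSet G X C }) rfl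
  have hF : ∀ n, ∃ F : Set (Set (Ends G)), F.Finite ∧
      F ⊆ { U | ∃ (X : Finset V) (C : G.ComponentCompl (X : Set V)), U = basicSet G X C } ∧
      ω ∈ ⋂₀ F ∧ ⋂₀ F ⊆ s n := by
    intro n
    have hsn : s n ∈ nhds ω := hs.1.mem_of_mem trivial
    have hωi : ω ∈ interior (s n) := mem_interior_iff_mem_nhds.mpr hsn
    obtain ⟨b, hb, hωb, hbsub⟩ := hbasis.exists_subset_of_mem_open hωi isOpen_interior
    obtain ⟨F, ⟨hfin, hsub⟩, rfl⟩ := hb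
    exact ⟨F, hfin, hsub, hωb, hbsub.trans interior_subset⟩
  choose F hFfin hFsub hωF hFs using hF
  have hxs : ∀ n, ∀ U ∈ F n,
      ∃ (X : Finset V) (C : G.ComponentCompl (X : Set V)), U = basicSet G X C :=
    fun n U hU => hFsub n hU
  choose! xOf Cof hUeq using hxs
  set Y : Set V := ⋃ n, ⋃ U ∈ F n, ((xOf n U : Finset V) : Set V) with hYdef
  have hYc : Y.Countable :=
    Set.countable_iUnion fun n =>
      Set.Countable.biUnion (hFfin n).countable fun U _ => (xOf n U).countable_toSet
  -- the set of indices whose path meets Y is countable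
  have hBc : {i : I | ∃ v ∈ P i, v ∈ Y}.Countable := by
    rw [← Set.countable_coe_iff]
    choose g hg1 hg2 using fun i : {i : I | ∃ v ∈ P i, v ∈ Y} => i.2
    haveI : Countable Y := hYc.to_subtype
    refine Function.Injective.countable
      (f := fun i : {i : I | ∃ v ∈ P i, v ∈ Y} => (⟨g i, hg2 i⟩ : Y)) ?_
    intro a b hab
    have hgab : g a = g b := congrArg Subtype.val hab
    by_contra hne'
    have hne2 : (a : I) ≠ (b : I) := fun h => hne' (Subtype.ext h)
    exact Set.disjoint_left.mp (hdisj a b hne2) (hg1 a) (hgab ▸ hg1 b)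
  -- pick a good index
  obtain ⟨i, hi⟩ : ∃ i : I, ∀ v ∈ P i, v ∉ Y := by
    by_contra h
    push_neg at h
    have huniv : (Set.univ : Set I).Countable := hBc.mono fun i _ => by
      obtain ⟨v, hv1, hv2⟩ := h i
      exact ⟨v, hv1, hv2⟩
    exact not_countable (Set.countable_univ_iff.mp huniv)
  -- the leaf of the good index is in every basis set
  have hleaf : ∀ n, leaf i ∈ s n := by
    intro n
    refine hFs n ?_
    intro U hU
    have hωU : ω ∈ U := hωF n U hU
    rw [hUeq n U hU] at hωU ⊢
    refine genpath_transfer (hpath i) (fun v hv hvX => hi v hv ?_) hωU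
    exact Set.mem_iUnion.mpr ⟨n, Set.mem_iUnion.mpr ⟨U, Set.mem_iUnion.mpr ⟨hU, hvX⟩⟩⟩
  -- separate ω from leaf i
  obtain ⟨X₀, C₀, hl, hnl⟩ := exists_sep (Ne.symm (hne i))
  have hopen : IsOpen (basicSet G X₀ C₀) :=
    TopologicalSpace.isOpen_generateFrom_of_mem ⟨X₀, C₀, rfl⟩
  have hmem : basicSet G X₀ C₀ ∈ nhds ω := hopen.mem_nhds hl
  obtain ⟨n, -, hsub⟩ := hs.1.mem_iff.mp hmem
  exact hnl (hsub (hleaf n))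
end

section
/- End spaces of graphs are strong Fréchet–Urysohn: for every graph G, every sequence of subsets A₀, A₁, … of Ω(G), and every end ω lying in the closure of every A_n, there exist ends ω_n ∈ A_n with ω_n → ω in Ω(G). -/
/-! Common definitions: rays, ends (à la Halin), the end space, directions
(via Mathlib's `SimpleGraph.end`), domination, generalised paths, etc. -/

open Classical SimpleGraph

universe u

variable {V : Type u}

namespace FUAux
variable {G : SimpleGraph V}

/-- beyond some index, a ray avoids a finite set -/
lemma ray_avoid (R : Ray G) (K : Finset V) : ∃ N, ∀ n, N ≤ n → R.f n ∉ (K : Set V) := by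
  have hfin : (R.f ⁻¹' (K : Set V)).Finite :=
    Set.Finite.preimage (Set.injOn_of_injective R.inj) K.finite_toSet
  obtain ⟨N, hN⟩ := hfin.bddAbove
  refine ⟨N + 1, fun n hn hmem => ?_⟩
  have := hN hmem
  omega

/-- chain along a ray: components agree -/
lemma ray_mk_eq (R : Ray G) {K : Set V} {N : ℕ} (h : ∀ n, N ≤ n → R.f n ∉ K) :
    ∀ m (hm : N ≤ m), G.componentComplMk (h N le_rfl) = G.componentComplMk (h m hm) := by
  intro m hm
  induction m, hm using Nat.le_induction with
  | base => rfl
  | succ n hn ih =>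
    exact ih.trans (G.componentComplMk_eq_of_adj (h n hn) (h (n+1) (by omega)) (R.adj n))

lemma exists_tail_comp (R : Ray G) (K : Finset V) :
    ∃ C : G.ComponentCompl (K : Set V), R.TailIn C := by
  obtain ⟨N, hN⟩ := ray_avoid R K
  refine ⟨G.componentComplMk (hN N le_rfl), N, fun n hn => ?_⟩
  exact ⟨hN n hn, (ray_mk_eq R hN n hn).symm⟩

lemma tailIn_unique {R : Ray G} {K : Finset V} {C D : G.ComponentCompl (K : Set V)}
    (hC : R.TailIn C) (hD : R.TailIn D) : C = D := by
  obtain ⟨N₁, h₁⟩ := hC; obtain ⟨N₂, h₂⟩ := hD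
  obtain ⟨hm, he⟩ := h₁ (max N₁ N₂) (le_max_left _ _)
  obtain ⟨hm', he'⟩ := h₂ (max N₁ N₂) (le_max_right _ _)
  exact he.symm.trans he'

end FUAux

namespace FUAux
variable {G : SimpleGraph V}

lemma rayEquiv_refl (R : Ray G) : RayEquiv G R R := fun X => by
  obtain ⟨C, hC⟩ := exists_tail_comp R X
  exact ⟨C, hC, hC⟩

/-- the defining ray of an end -/
noncomputable def rayOf (a : Ends G) : Ray G := a.2.choose

lemma rayOf_spec (a : Ends G) : a.1 = { S | RayEquiv G (rayOf a) S } := a.2.choose_spec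

lemma rayOf_mem (a : Ends G) : rayOf a ∈ a.1 := by
  rw [rayOf_spec]; exact rayEquiv_refl _

/-- the component of `G - X` in which the end `a` lives -/
noncomputable def comp (a : Ends G) (X : Finset V) : G.ComponentCompl (X : Set V) :=
  (exists_tail_comp (rayOf a) X).choose

lemma comp_spec (a : Ends G) (X : Finset V) : (rayOf a).TailIn (comp a X) :=
  (exists_tail_comp (rayOf a) X).choose_spec

lemma tailIn_comp_of_mem {a : Ends G} {S : Ray G} (hS : S ∈ a.1) (X : Finset V) :
    S.TailIn (comp a X) := by
  rw [rayOf_spec] at hS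
  obtain ⟨C, h1, h2⟩ := hS X
  rwa [tailIn_unique h1 (comp_spec a X)] at h2

lemma livesIn_iff {a : Ends G} {X : Finset V} {C : G.ComponentCompl (X : Set V)} :
    LivesIn a X C ↔ comp a X = C := by
  constructor
  · intro H
    exact tailIn_unique (comp_spec a X) (H (rayOf a) (rayOf_mem a))
  · rintro rfl S hS
    exact tailIn_comp_of_mem hS X

lemma mem_basicSet_iff {a : Ends G} {X : Finset V} {C : G.ComponentCompl (X : Set V)} :
    a ∈ basicSet G X C ↔ comp a X = C := livesIn_iff

/-- transfer a walk in `G - Z` to component equality in `G - X` -/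
lemma walk_mk {K : Set V} {X : Set V} :
    ∀ {u v : ↥Kᶜ} (W : (G.induce Kᶜ).Walk u v),
      (∀ w ∈ W.support, (w : V) ∉ X) →
      ∀ (hu : (u : V) ∉ X) (hv : (v : V) ∉ X),
        G.componentComplMk hu = G.componentComplMk hv := by
  intro u v W
  induction W with
  | nil => intro _ _ _; rfl
  | @cons u a b h p ih =>
    intro hW hu hv
    have hmid : (a : V) ∉ X := hW a (by simp)
    exact (G.componentComplMk_eq_of_adj hu hmid h).trans
      (ih (fun w hw => hW w (by simp [hw])) hmid hv)

/-- vertices on a walk inside `G - Z` starting in a component stay in that component -/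
lemma walk_supp_mem {K : Set V} {u v : ↥Kᶜ} (W : (G.induce Kᶜ).Walk u v)
    {C : G.ComponentCompl K} (hu : (u : V) ∈ C) :
    ∀ w ∈ W.support, (w : V) ∈ C := by
  intro w hw
  obtain ⟨hu', he⟩ := hu
  refine ⟨w.2, ?_⟩
  have hr : (G.induce Kᶜ).Reachable u w := ⟨W.takeUntil w hw⟩
  have : G.componentComplMk w.2 = G.componentComplMk hu' := by
    exact (SimpleGraph.ConnectedComponent.sound hr.symm)
  rw [this, he]

section Recursion
variable {V : Type u}

/-- the finite set collecting the first `n` values of the first `n` danger functions -/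
noncomputable def Zof (H : ℕ → ℕ → V) (n : ℕ) : Finset V :=
  (Finset.range n ×ˢ Finset.range n).image fun p => H p.1 p.2

/-- the history of danger functions -/
noncomputable def hist (v₀ : V) (step : ℕ → Finset V → (ℕ → V)) : ℕ → ℕ → ℕ → V
  | 0 => fun _ _ => v₀
  | n+1 => fun k => if k = n then step n (Zof (hist v₀ step n) n) else hist v₀ step n k

noncomputable def dseq (v₀ : V) (step : ℕ → Finset V → (ℕ → V)) (k : ℕ) : ℕ → V :=
  hist v₀ step (k+1) k

noncomputable def Zseq (v₀ : V) (step : ℕ → Finset V → (ℕ → V)) (n : ℕ) : Finset V :=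
  Zof (hist v₀ step n) n

lemma hist_eq (v₀ : V) (step : ℕ → Finset V → (ℕ → V)) :
    ∀ m k, k < m → hist v₀ step m k = dseq v₀ step k := by
  intro m
  induction m with
  | zero => omega
  | succ n ih =>
    intro k hk
    by_cases hkn : k = n
    · subst hkn; rfl
    · have hlt : k < n := by omega
      show (if k = n then _ else hist v₀ step n k) = _
      rw [if_neg hkn]
      exact ih k hlt

lemma dseq_eq (v₀ : V) (step : ℕ → Finset V → (ℕ → V)) (n : ℕ) :
    dseq v₀ step n = step n (Zseq v₀ step n) := by
  show (if n = n then _ else _) = _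
  rw [if_pos rfl]
  rfl

lemma mem_Zseq (v₀ : V) (step : ℕ → Finset V → (ℕ → V)) {k j n : ℕ}
    (hk : k < n) (hj : j < n) : dseq v₀ step k j ∈ Zseq v₀ step n := by
  have : Zseq v₀ step n =
      (Finset.range n ×ˢ Finset.range n).image (fun p => dseq v₀ step p.1 p.2) := by
    unfold Zseq Zof
    apply Finset.image_congr
    intro q hq
    simp only [Finset.coe_product, Set.mem_prod, Finset.mem_coe, Finset.mem_range] at hq
    show hist v₀ step n q.1 q.2 = dseq v₀ step q.1 q.2
    rw [hist_eq v₀ step n q.1 hq.1]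
  rw [this]
  exact Finset.mem_image.mpr ⟨(k, j), by simp [hk, hj], rfl⟩

end Recursion


variable {G : SimpleGraph V}

/-- KEY: if `a` agrees with `ω` at `Z`, there is a countable set of vertices inside
the common component (encoded as a function `d`) such that any finite `X` avoiding it
does not separate `a` from `ω`. -/
lemma key {ω a : Ends G} {Z : Finset V} (hagree : comp a Z = comp ω Z) :
    ∃ d : ℕ → V, (∀ j, d j ∈ (comp ω Z : Set V)) ∧
      ∀ X : Finset V, (∀ j, d j ∉ (X : Set V)) → comp a X = comp ω X := by
  classical
  set R₁ := rayOf ω with hR₁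
  set R₂ := rayOf a with hR₂
  set D := comp ω Z with hD
  obtain ⟨N₁, h₁⟩ := comp_spec ω Z
  have h₂' := comp_spec a Z
  rw [hagree] at h₂'
  obtain ⟨N₂, h₂⟩ := h₂'
  have hu : R₁.f N₁ ∈ D := h₁ N₁ le_rfl
  have hv : R₂.f N₂ ∈ D := h₂ N₂ le_rfl
  obtain ⟨huZ, hue⟩ := hu
  obtain ⟨hvZ, hve⟩ := hv
  have hreach : (G.induce ((Z : Set V))ᶜ).Reachable ⟨R₁.f N₁, huZ⟩ ⟨R₂.f N₂, hvZ⟩ :=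
    SimpleGraph.ConnectedComponent.exact (hue.trans hve.symm)
  let W := hreach.some
  let L := W.support
  refine ⟨fun j => if j % 3 = 0 then R₁.f (N₁ + j / 3) else if j % 3 = 1 then
      R₂.f (N₂ + j / 3) else (L.getD (j/3) ⟨R₁.f N₁, huZ⟩ : ↥((Z : Set V))ᶜ).val, ?_, ?_⟩
  · intro j
    dsimp only
    by_cases e0 : j % 3 = 0
    · rw [if_pos e0]; exact h₁ _ (Nat.le_add_right _ _)
    · rw [if_neg e0]
      by_cases e1 : j % 3 = 1
      · rw [if_pos e1]; exact h₂ _ (Nat.le_add_right _ _)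
      · rw [if_neg e1]
        by_cases hlt : j / 3 < L.length
        · rw [List.getD_eq_getElem _ _ hlt]
          exact walk_supp_mem W (h₁ N₁ le_rfl) _ (List.getElem_mem hlt)
        · rw [List.getD_eq_default _ _ (not_lt.mp hlt)]
          exact h₁ N₁ le_rfl
  · intro X hX
    have hRu : ∀ n, N₁ ≤ n → R₁.f n ∉ (X : Set V) := by
      intro n hn
      have h3 := hX (3 * (n - N₁))
      have e0 : 3 * (n - N₁) % 3 = 0 := by omega
      have e2 : N₁ + 3 * (n - N₁) / 3 = n := by omega
      dsimp only at h3
      rwa [if_pos e0, e2] at h3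
    have hRv : ∀ n, N₂ ≤ n → R₂.f n ∉ (X : Set V) := by
      intro n hn
      have h3 := hX (3 * (n - N₂) + 1)
      have e0 : ¬ ((3 * (n - N₂) + 1) % 3 = 0) := by omega
      have e1 : (3 * (n - N₂) + 1) % 3 = 1 := by omega
      have e2 : N₂ + (3 * (n - N₂) + 1) / 3 = n := by omega
      dsimp only at h3
      rwa [if_neg e0, if_pos e1, e2] at h3
    have hL : ∀ w ∈ L, (w : V) ∉ (X : Set V) := by
      intro w hw
      obtain ⟨i, rfl⟩ := List.mem_iff_get.mp hw
      have h3 := hX (3 * (i : ℕ) + 2)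
      have e0 : ¬ ((3 * (i : ℕ) + 2) % 3 = 0) := by omega
      have e1 : ¬ ((3 * (i : ℕ) + 2) % 3 = 1) := by omega
      have e2 : (3 * (i : ℕ) + 2) / 3 = (i : ℕ) := by omega
      dsimp only at h3
      rw [if_neg e0, if_neg e1, e2] at h3
      rw [List.getD_eq_getElem _ _ (by simp)] at h3
      exact h3
    -- `comp ω X` equals the component of `R₁.f N₁` in `G - X`
    obtain ⟨M₁, hM₁⟩ := comp_spec ω X
    have e_ω : G.componentComplMk (hRu N₁ le_rfl) = comp ω X := by
      obtain ⟨hmX, hme⟩ := hM₁ (max N₁ M₁) (le_max_right _ _)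
      exact (ray_mk_eq R₁ hRu (max N₁ M₁) (le_max_left _ _)).trans hme
    obtain ⟨M₂, hM₂⟩ := comp_spec a X
    have e_a : G.componentComplMk (hRv N₂ le_rfl) = comp a X := by
      obtain ⟨hmX, hme⟩ := hM₂ (max N₂ M₂) (le_max_right _ _)
      exact (ray_mk_eq R₂ hRv (max N₂ M₂) (le_max_left _ _)).trans hme
    have e_w : G.componentComplMk (hRu N₁ le_rfl) = G.componentComplMk (hRv N₂ le_rfl) :=
      walk_mk W hL (hRu N₁ le_rfl) (hRv N₂ le_rfl)
    rw [← e_a, ← e_w, e_ω]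

end FUAux



/-- End spaces of graphs are strong Fréchet–Urysohn. -/
theorem stmt_7 {V : Type u} (G : SimpleGraph V) (A : ℕ → Set (Ends G))
    (ω : Ends G) (h : ∀ n, ω ∈ closure (A n)) :
    ∃ x : ℕ → Ends G, (∀ n, x n ∈ A n) ∧
      Filter.Tendsto x Filter.atTop (nhds ω) := by
  classical
  have hclo : ∀ n (Z : Finset V), ∃ a, a ∈ A n ∧ FUAux.comp a Z = FUAux.comp ω Z := by
    intro n Z
    have h1 : ω ∈ closure (A n) := h n
    rw [mem_closure_iff] at h1
    obtain ⟨a, haU, haA⟩ := h1 (basicSet G Z (FUAux.comp ω Z))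
      (TopologicalSpace.isOpen_generateFrom_of_mem ⟨Z, FUAux.comp ω Z, rfl⟩)
      (FUAux.mem_basicSet_iff.mpr rfl)
    exact ⟨a, haA, FUAux.mem_basicSet_iff.mp haU⟩
  have step : ∀ n (Z : Finset V), ∃ q : Ends G × (ℕ → V), q.1 ∈ A n ∧
      (∀ j, q.2 j ∈ (FUAux.comp ω Z : Set V)) ∧
      (∀ X : Finset V, (∀ j, q.2 j ∉ (X : Set V)) → FUAux.comp q.1 X = FUAux.comp ω X) := by
    intro n Z
    obtain ⟨a, hA, hag⟩ := hclo n Z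
    obtain ⟨d, hd1, hd2⟩ := FUAux.key hag
    exact ⟨(a, d), hA, hd1, hd2⟩
  choose q hq1 hq2 hq3 using step
  set v₀ := (FUAux.rayOf ω).f 0 with hv₀
  set stepd : ℕ → Finset V → (ℕ → V) := fun n Z => (q n Z).2 with hstepd
  set d := FUAux.dseq v₀ stepd with hdd
  set Z := FUAux.Zseq v₀ stepd with hZZ
  set x : ℕ → Ends G := fun n => (q n (Z n)).1 with hx
  have hd : ∀ n, d n = (q n (Z n)).2 := fun n => FUAux.dseq_eq v₀ stepd n
  refine ⟨x, fun n => hq1 n (Z n), ?_⟩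
  have main : ∀ (X : Finset V) (C : G.ComponentCompl (X : Set V)),
      ω ∈ basicSet G X C → ∀ᶠ n in Filter.atTop, x n ∈ basicSet G X C := by
    intro X C hω
    have hC : FUAux.comp ω X = C := FUAux.mem_basicSet_iff.mp hω
    have hfin : {n | FUAux.comp (x n) X ≠ FUAux.comp ω X}.Finite := by
      by_contra hinf
      have hinf' : {n | FUAux.comp (x n) X ≠ FUAux.comp ω X}.Infinite := hinf
      have hbad : ∀ n, ∃ j, FUAux.comp (x n) X ≠ FUAux.comp ω X → d n j ∈ (X : Set V) := by
        intro n
        by_cases hb : FUAux.comp (x n) X ≠ FUAux.comp ω X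
        · by_contra hc
          push_neg at hc
          refine hb (hq3 n (Z n) X (fun j => ?_))
          have := (hc j).2
          rwa [hd n] at this
        · exact ⟨0, fun hb' => absurd hb' hb⟩
      choose jf hjf using hbad
      have hsub : {n | FUAux.comp (x n) X ≠ FUAux.comp ω X} ⊆
          ⋃ v ∈ (X : Finset V), {n | FUAux.comp (x n) X ≠ FUAux.comp ω X ∧ d n (jf n) = v} := by
        intro n hn
        exact Set.mem_biUnion (hjf n hn) ⟨hn, rfl⟩
      have hT : ∃ v ∈ (X : Finset V),
          {n | FUAux.comp (x n) X ≠ FUAux.comp ω X ∧ d n (jf n) = v}.Infinite := by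
        by_contra hall
        push_neg at hall
        exact hinf' ((Set.Finite.biUnion X.finite_toSet
          (fun v hv => hall v (by simpa using hv))).subset hsub)
      obtain ⟨w, hwX, hTinf⟩ := hT
      obtain ⟨n₀, hn₀⟩ := hTinf.nonempty
      obtain ⟨n₁, hn₁T, hn₁gt⟩ := hTinf.exists_gt (max n₀ (jf n₀))
      have hwZ : w ∈ Z n₁ := by
        rw [← hn₀.2]
        exact FUAux.mem_Zseq v₀ stepd (by omega) (by omega)
      have hwC : w ∈ (FUAux.comp ω (Z n₁) : Set V) := by
        rw [← hn₁T.2, hd n₁]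
        exact hq2 n₁ (Z n₁) (jf n₁)
      exact (SimpleGraph.ComponentCompl.notMem_of_mem hwC) hwZ
    have hev : ∀ᶠ n in Filter.atTop, FUAux.comp (x n) X = FUAux.comp ω X := by
      rw [← Nat.cofinite_eq_atTop]
      exact Filter.eventually_cofinite.mpr hfin
    exact hev.mono fun n hn => FUAux.mem_basicSet_iff.mpr (hn.trans hC)
  refine TopologicalSpace.tendsto_nhds_generateFrom_iff.mpr ?_
  rintro s ⟨X, C, rfl⟩ hω
  exact main X C hω
end
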